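/- Work with the model (𝒦,r) = (𝒦_s,r_s) for s sufficiently large and a constant C chosen sufficiently large depending on s. For every u ∈ 𝒬 ∖ 𝒮 and every non-degenerate droplet D with u-extension D', we have [D]_{D'∖D} ⊇ D' ∩ ℤ². For every u ∈ 𝒮, every non-degenerate droplet D with u-extension D', and every x ∈ ((((D'∖D) ∩ ℤ²) + 𝒦) ∖ D), we have [{x} ∪ D]_{D'∖D} ⊇ D' ∩ ℤ². -/

import Mathlib

open Set MeasureTheory Filter
open scoped RealInnerProductSpace Pointwise ENNReal

noncomputable section

/-- The Euclidean plane. -/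
abbrev E : Type := EuclideanSpace ℝ (Fin 2)

/-- The point of the plane with coordinates `(a, b)`. -/
def pt (a b : ℝ) : E := (WithLp.equiv 2 (Fin 2 → ℝ)).symm ![a, b]

/-- The integer lattice `ℤ²` viewed inside the plane. -/
def latt : Set E := {x : E | ∃ a b : ℤ, x = pt a b}

/-- One step of threshold bootstrap percolation on `ℤ²` with neighbourhood `𝒦` and threshold `r`. -/
def step (𝒦 : Set E) (r : ℕ) (A : Set E) : Set E :=
  A ∪ {x : E | x ∈ latt ∧ r ≤ (((fun k => x + k) '' 𝒦) ∩ A).ncard}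

/-- The bootstrap percolation closure `[A]` (of the lattice points of `A`). -/
def bpCl (𝒦 : Set E) (r : ℕ) (A : Set E) : Set E :=
  ⋃ t : ℕ, (step 𝒦 r)^[t] (A ∩ latt)

/-- One step of the bootstrap percolation dynamics restricted to the region `B`. -/
def stepIn (𝒦 : Set E) (r : ℕ) (B A : Set E) : Set E :=
  A ∪ {x : E | x ∈ B ∩ latt ∧ r ≤ (((fun k => x + k) '' 𝒦) ∩ A).ncard}

/-- The closure `[A]_B` of `A` under the dynamics restricted to `B`. -/
def bpClIn (𝒦 : Set E) (r : ℕ) (B A : Set E) : Set E :=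
  ⋃ t : ℕ, (stepIn 𝒦 r B)^[t] (A ∩ latt)

/-- Rotation of the plane by `π/2` around the origin. -/
def rot (x : E) : E := pt (-(x 1)) (x 0)

/-- A "nice" set `K`: convex, invariant under rotation by `π/2` about the origin,
with `max {‖k‖ : k ∈ K} = 1`. -/
structure NiceK (K : Set E) : Prop where
  convex : Convex ℝ K
  rotInv : ∀ x ∈ K, rot x ∈ K
  normMax : IsGreatest ((fun k : E => ‖k‖) '' K) 1

/-- The neighbourhood `𝒦_s = (sK) ∩ ℤ²`. -/
def Ks (K : Set E) (s : ℝ) : Set E := (s • K) ∩ latt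

/-- The threshold `r_s = 1 + min_{u ≠ 0} |{x ∈ 𝒦_s : ⟨x,u⟩ < 0}|`. -/
def rKs (K : Set E) (s : ℝ) : ℕ :=
  1 + sInf ((fun u : E => {x : E | x ∈ Ks K s ∧ (inner ℝ x u : ℝ) < 0}.ncard) '' {u : E | u ≠ 0})

/-- The neighbourhood `𝒦_□` of the two-neighbour model. -/
def Ksq : Set E := {pt 0 0, pt 1 0, pt (-1) 0, pt 0 1, pt 0 (-1)}

/-- The neighbourhood `𝒦_△` of the three-neighbour model on the triangular lattice. -/
def Ktri : Set E := Ksq ∪ {pt 1 (-1), pt (-1) 1}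

/-- The set `𝒮` of stable directions of the model `(𝒦, r)`. -/
def stableDirs (𝒦 : Set E) (r : ℕ) : Set E :=
  {u : E | ‖u‖ = 1 ∧ {x : E | x ∈ 𝒦 ∧ (inner ℝ x u : ℝ) < 0}.ncard < r}

/-- The box `Λ_t = [-t,t]² ∩ ℤ²`. -/
def lam (t : ℝ) : Set E := {x ∈ latt | |x 0| ≤ t ∧ |x 1| ≤ t}

/-- A set `V` is `κ`-connected if any two of its points are joined by a finite
sequence of points of `V` with consecutive points at distance at most `κ`. -/
def ConnectedWithin (κ : ℝ) (V : Set E) : Prop :=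
  ∀ x ∈ V, ∀ y ∈ V, ∃ (k : ℕ) (f : ℕ → E), f 0 = x ∧ f k = y ∧
    (∀ i ≤ k, f i ∈ V) ∧ ∀ i < k, dist (f i) (f (i + 1)) ≤ κ

/-- `A` contains a `κ`-connected set of `14` sites. -/
def HasConn14 (κ : ℝ) (A : Set E) : Prop :=
  ∃ V ⊆ A, ConnectedWithin κ V ∧ V.ncard = 14

/-- Projection of a set of lattice points of the plane to the torus `(ℤ/nℤ)²`. -/
def torSet (n : ℕ) (S : Set E) : Set (ZMod n × ZMod n) :=
  {p | ∃ a b : ℤ, pt a b ∈ S ∧ p = ((a : ZMod n), (b : ZMod n))}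

/-- One step of bootstrap percolation on the torus `(ℤ/nℤ)²`. -/
def stepT (n : ℕ) (𝒦 : Set E) (r : ℕ) (A : Set (ZMod n × ZMod n)) : Set (ZMod n × ZMod n) :=
  A ∪ {x | r ≤ (((fun k => x + k) '' torSet n 𝒦) ∩ A).ncard}

/-- The bootstrap percolation closure on the torus `(ℤ/nℤ)²`. -/
def bpClT (n : ℕ) (𝒦 : Set E) (r : ℕ) (A : Set (ZMod n × ZMod n)) : Set (ZMod n × ZMod n) :=
  ⋃ t : ℕ, (stepT n 𝒦 r)^[t] A

/-- The set `A(t)` of the first `t` sites of the torus in the order given by `σ`. -/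
def Aset (n : ℕ) (σ : (ZMod n × ZMod n) ≃ Fin (n ^ 2)) (t : ℕ) : Set (ZMod n × ZMod n) :=
  {x | (σ x : ℕ) + 1 ≤ t}

/-- The percolation time `τ`. -/
def percTime (n : ℕ) (𝒦 : Set E) (r : ℕ) (σ : (ZMod n × ZMod n) ≃ Fin (n ^ 2)) : ℕ :=
  sInf {t : ℕ | bpClT n 𝒦 r (Aset n σ t) = univ}

/-- The probability (over a uniformly random bijection `σ : 𝕋 → {1,…,n²}`) that
`|[A(τ-1)]| ≥ τ (1 + C / log n)`. -/
def probBad (𝒦 : Set E) (r : ℕ) (C : ℝ) (n : ℕ) : ℝ :=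
  ({σ : (ZMod n × ZMod n) ≃ Fin (n ^ 2) |
      (percTime n 𝒦 r σ : ℝ) * (1 + C / Real.log n) ≤
        ((bpClT n 𝒦 r (Aset n σ (percTime n 𝒦 r σ - 1))).ncard : ℝ)}.ncard : ℝ) /
    (Nat.card ((ZMod n × ZMod n) ≃ Fin (n ^ 2)) : ℝ)

/-- The rectangle with corner `x`, side of length `len` in direction `rot u`
(perpendicular to `u`) and side of length `wid` in direction `u`. -/
def rectDir (x u : E) (len wid : ℝ) : Set E :=
  {y : E | ∃ a b : ℝ, a ∈ Icc (0 : ℝ) len ∧ b ∈ Icc (0 : ℝ) wid ∧ y = x + a • rot u + b • u}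

/-- The axis-parallel square `[a, a+c] × [b, b+c]`. -/
def axSquare (a b c : ℝ) : Set E := {x : E | x 0 ∈ Icc a (a + c) ∧ x 1 ∈ Icc b (b + c)}

/-- Droplets for the family `S` of stable directions: `D = ℤ² ∩ ⋂_{u ∈ S} {⟨·,u⟩ ≤ l_u}`. -/
def IsDropletS (S : Set E) (D : Set E) : Prop :=
  ∃ l : E → ℝ, D = latt ∩ ⋂ u ∈ S, {x : E | (inner ℝ x u : ℝ) ≤ l u}

/-- The stable directions `𝒮_□` of the two-neighbour model. -/
def Ssq : Set E := {pt 1 0, pt (-1) 0, pt 0 1, pt 0 (-1)}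

/-- The stable directions `𝒮_△` of the triangular three-neighbour model. -/
def Stri : Set E :=
  Ssq ∪ {pt ((Real.sqrt 2)⁻¹) ((Real.sqrt 2)⁻¹), pt (-(Real.sqrt 2)⁻¹) (-(Real.sqrt 2)⁻¹)}

/-- A valid choice of infection sets `𝒦_v ⊆ A_t ∩ (𝒦 + v)` of size `r`, one for each
newly infected vertex `v`. -/
def IsInfChoice (𝒦 : Set E) (r : ℕ) (A : Set E) (κ : E → Set E) : Prop :=
  ∀ t : ℕ, ∀ v ∈ (step 𝒦 r)^[t + 1] (A ∩ latt) \ (step 𝒦 r)^[t] (A ∩ latt),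
    κ v ⊆ (step 𝒦 r)^[t] (A ∩ latt) ∩ ((fun k => v + k) '' 𝒦) ∧ (κ v).ncard = r

/-- The out-degree of `u` in the infection graph determined by the choice `κ`. -/
def outDeg (𝒦 : Set E) (r : ℕ) (A : Set E) (κ : E → Set E) (u : E) : ℕ :=
  {v : E | (∃ t : ℕ, v ∈ (step 𝒦 r)^[t + 1] (A ∩ latt) \ (step 𝒦 r)^[t] (A ∩ latt)) ∧
    u ∈ κ v}.ncard

/-- A vertex of `[A]` is good if its out-degree in the infection graph is at least `0.9 r`. -/
def IsGood (𝒦 : Set E) (r : ℕ) (A : Set E) (κ : E → Set E) (u : E) : Prop :=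
  u ∈ bpCl 𝒦 r A ∧ (0.9 : ℝ) * r ≤ (outDeg 𝒦 r A κ u : ℝ)

/-- A fat convex set: bounded, convex, and all vertical and horizontal chords have
length at least `c`. -/
def IsFat (c : ℝ) (P : Set E) : Prop :=
  Convex ℝ P ∧ Bornology.IsBounded P ∧
  (∀ a : ℝ, (P ∩ {p : E | p 0 = a}).Nonempty → c ≤ Metric.diam (P ∩ {p : E | p 0 = a})) ∧
  (∀ b : ℝ, (P ∩ {p : E | p 1 = b}).Nonempty → c ≤ Metric.diam (P ∩ {p : E | p 1 = b}))

def xmin (P : Set E) : ℝ := sInf ((fun p : E => p 0) '' P)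
def xmax (P : Set E) : ℝ := sSup ((fun p : E => p 0) '' P)
def ymin (P : Set E) : ℝ := sInf ((fun p : E => p 1) '' P)
def ymax (P : Set E) : ℝ := sSup ((fun p : E => p 1) '' P)

/-- A convex set is horizontal if its horizontal extent is at least its vertical extent. -/
def IsHorizontal (P : Set E) : Prop := ymax P - ymin P ≤ xmax P - xmin P

/-- The upper boundary function of `P`. -/
def upperF (P : Set E) (a : ℝ) : ℝ := sSup {y : ℝ | pt a y ∈ P}

/-- The lower boundary function of `P`. -/
def lowerF (P : Set E) (a : ℝ) : ℝ := sInf {y : ℝ | pt a y ∈ P}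

/-- Slopes of tangent (supporting) lines to the upper boundary of `P` at abscissa `a`. -/
def upperSlopes (P : Set E) (a : ℝ) : Set ℝ :=
  {m : ℝ | ∀ t : ℝ, {y : ℝ | pt t y ∈ P}.Nonempty → upperF P t ≤ upperF P a + m * (t - a)}

/-- Slopes of tangent (supporting) lines to the lower boundary of `P` at abscissa `a`. -/
def lowerSlopes (P : Set E) (a : ℝ) : Set ℝ :=
  {m : ℝ | ∀ t : ℝ, {y : ℝ | pt t y ∈ P}.Nonempty → lowerF P a + m * (t - a) ≤ lowerF P t}

/-- The vertical chord `P_{1,a}` is admissible: the tangent angles at the chord are in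
`[-4π/9, 4π/9]` and the tangent slopes barely change at horizontal distance `C₄ s`. -/
def IsAdmissible (C₃ C₄ s : ℝ) (P : Set E) (a : ℝ) : Prop :=
  xmin P + C₄ * s < a ∧ a < xmax P - C₄ * s ∧ (∃ y : ℝ, pt a y ∈ P) ∧
  (∀ m ∈ upperSlopes P a, |Real.arctan m| ≤ 4 * Real.pi / 9) ∧
  (∀ m ∈ lowerSlopes P a, |Real.arctan m| ≤ 4 * Real.pi / 9) ∧
  (∀ m₁ ∈ upperSlopes P (a - C₄ * s), ∀ m₂ ∈ upperSlopes P (a + C₄ * s),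
    Real.arctan m₁ - Real.arctan m₂ ≤ 1 / C₃) ∧
  (∀ m₁ ∈ lowerSlopes P (a - C₄ * s), ∀ m₂ ∈ lowerSlopes P (a + C₄ * s),
    Real.arctan m₂ - Real.arctan m₁ ≤ 1 / C₃)

/-- The set `𝒬` of quasi-stable directions. -/
def quasiStable (s : ℝ) : Set E :=
  {u : E | ‖u‖ = 1 ∧ ∃ a b : ℤ, |(a : ℝ)| ≤ s ∧ |(b : ℝ)| ≤ s ∧ pt a b ≠ 0 ∧
    ∃ c : ℝ, pt a b = c • u}

/-- The (possibly improper) half-plane `{⟨·,u⟩ ≤ l}` for `l ∈ ℝ ∪ {±∞}`. -/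
def ehs (u : E) (l : EReal) : Set E := {x : E | (((inner ℝ x u : ℝ) : ℝ) : EReal) ≤ l}

/-- The droplet with radii `l : E → EReal` (indexed by the quasi-stable directions). -/
def dropletOf (s : ℝ) (l : E → EReal) : Set E := ⋂ u ∈ quasiStable s, ehs u (l u)

/-- `D` is a droplet for the quasi-stable directions. -/
def IsDropletQ (s : ℝ) (D : Set E) : Prop := ∃ l : E → EReal, D = dropletOf s l

/-- The tight radius of `D` in direction `u`. -/
def tight (D : Set E) (u : E) : EReal := sSup ((fun x : E => (((inner ℝ x u : ℝ) : ℝ) : EReal)) '' D)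

/-- The `u`-side of a droplet `D`. -/
def uside (u : E) (D : Set E) : Set E := {x ∈ D | ∀ y ∈ D, (inner ℝ y u : ℝ) ≤ (inner ℝ x u : ℝ)}

/-- A non-degenerate droplet: each `u`-side has length at least `C^{1/3}` for unstable
`u ∈ 𝒬` and at least `C^{1/2}` for stable `u ∈ 𝒬`. -/
def IsNondeg (s C : ℝ) (𝒦 : Set E) (r : ℕ) (D : Set E) : Prop :=
  IsDropletQ s D ∧ ∀ u ∈ quasiStable s,
    (u ∉ stableDirs 𝒦 r → C ^ ((1 : ℝ) / 3) ≤ Metric.diam (uside u D)) ∧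
    (u ∈ stableDirs 𝒦 r → C ^ ((1 : ℝ) / 2) ≤ Metric.diam (uside u D))

/-- The droplet obtained from `D` by replacing its tight radius in direction `v` by `m`. -/
def extDroplet (s : ℝ) (v : E) (D : Set E) (m : EReal) : Set E :=
  (⋂ u ∈ quasiStable s \ {v}, ehs u (tight D u)) ∩ ehs v m

/-- `D'` is the `v`-extension of the droplet `D`. -/
def IsExtension (s : ℝ) (v : E) (D D' : Set E) : Prop :=
  ∃ l' : EReal, tight D v < l' ∧ D' = extDroplet s v D l' ∧
    ((D' \ D) ∩ latt).Nonempty ∧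
    ∀ m : EReal, tight D v < m → ((extDroplet s v D m \ D) ∩ latt).Nonempty → l' ≤ m

/-- Rotation of the plane by the angle `θ`. -/
def rotA (θ : ℝ) (u : E) : E :=
  pt (Real.cos θ * u 0 - Real.sin θ * u 1) (Real.sin θ * u 0 + Real.cos θ * u 1)

/-- The closed half-plane `H̄_u(l)`. -/
def hs (u : E) (l : ℝ) : Set E := {x : E | (inner ℝ x u : ℝ) ≤ l}

/-- The open half-plane `ℍ_u(l)`. -/
def hso (u : E) (l : ℝ) : Set E := {x : E | (inner ℝ x u : ℝ) < l}

/-- Translate of a set. -/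
def transl (x : E) (S : Set E) : Set E := (fun y => x + y) '' S

/-- The rectangle `x + (H̄_u ∩ H̄_{u+π/2} ∩ H̄_{u+π}(wid) ∩ H̄_{u-π/2}(len))`. -/
def rectHS (x u : E) (wid len : ℝ) : Set E :=
  transl x (hs u 0 ∩ hs (rotA (Real.pi / 2) u) 0 ∩ hs (rotA Real.pi u) wid ∩
    hs (rotA (-(Real.pi / 2)) u) len)

end

section Infra

lemma pt0 (a b : ℝ) : pt a b 0 = a := rfl
lemma pt1 (a b : ℝ) : pt a b 1 = b := rfl

lemma ext2 {x y : E} (h0 : x 0 = y 0) (h1 : x 1 = y 1) : x = y := by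
  apply PiLp.ext; intro i; fin_cases i
  · exact h0
  · exact h1

lemma add_c (x y : E) (i : Fin 2) : (x + y) i = x i + y i := rfl
lemma smul_c (c : ℝ) (x : E) (i : Fin 2) : (c • x) i = c * x i := rfl
lemma neg_c (x : E) (i : Fin 2) : (-x) i = -(x i) := rfl
lemma sub_c (x y : E) (i : Fin 2) : (x - y) i = x i - y i := rfl
lemma zero_c (i : Fin 2) : (0 : E) i = 0 := rfl

lemma inner2 (x y : E) : (inner ℝ x y : ℝ) = x 0 * y 0 + x 1 * y 1 := by
  simp [PiLp.inner_apply, Fin.sum_univ_two, RCLike.inner_apply, mul_comm]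

lemma norm2 (x : E) : ‖x‖ = Real.sqrt (x 0 ^ 2 + x 1 ^ 2) := by
  rw [EuclideanSpace.norm_eq]; simp [Fin.sum_univ_two, sq_abs]

lemma normsq2 (x : E) : ‖x‖ ^ 2 = x 0 ^ 2 + x 1 ^ 2 := by
  rw [norm2, Real.sq_sqrt (by positivity)]

lemma abs_coord_le (x : E) (i : Fin 2) : |x i| ≤ ‖x‖ := by
  rw [norm2, ← Real.sqrt_sq_eq_abs]
  apply Real.sqrt_le_sqrt
  have h0 : x i = x 0 ∨ x i = x 1 := by fin_cases i; exacts [Or.inl rfl, Or.inr rfl]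
  rcases h0 with h | h <;> rw [h] <;> nlinarith [sq_nonneg (x 0), sq_nonneg (x 1)]

lemma norm_le_abs2 (x : E) : ‖x‖ ≤ |x 0| + |x 1| := by
  rw [norm2, ← Real.sqrt_sq (by positivity : (0:ℝ) ≤ |x 0| + |x 1|)]
  apply Real.sqrt_le_sqrt
  nlinarith [abs_nonneg (x 0), abs_nonneg (x 1), sq_abs (x 0), sq_abs (x 1),
    mul_nonneg (abs_nonneg (x 0)) (abs_nonneg (x 1))]

lemma rot_c0 (x : E) : rot x 0 = -(x 1) := rfl
lemma rot_c1 (x : E) : rot x 1 = x 0 := rfl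

lemma rot_rot (x : E) : rot (rot x) = -x := by
  apply ext2 <;> simp [rot_c0, rot_c1, neg_c]

lemma rot_smul (c : ℝ) (x : E) : rot (c • x) = c • rot x := by
  apply ext2 <;> simp [rot_c0, rot_c1, smul_c]

lemma norm_rot (x : E) : ‖rot x‖ = ‖x‖ := by
  rw [norm2, norm2, rot_c0, rot_c1]; ring_nf

lemma rot_ne_zero {x : E} (hx : x ≠ 0) : rot x ≠ 0 := by
  intro h
  apply hx
  apply ext2
  · have := congrArg (fun w : E => w 1) h; simpa [rot_c1, zero_c] using this
  · have := congrArg (fun w : E => w 0) h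
    simp only [rot_c0, zero_c] at this
    simpa [zero_c] using (neg_eq_zero.1 this)

lemma decomp2 (w : E) (hw : ‖w‖ = 1) (x : E) :
    x = (inner ℝ x w : ℝ) • w + (inner ℝ x (rot w) : ℝ) • rot w := by
  have h1 : w 0 ^ 2 + w 1 ^ 2 = 1 := by
    have := normsq2 w; rw [hw] at this; linarith
  apply ext2
  · simp only [add_c, smul_c, inner2, rot_c0, rot_c1]
    linear_combination (-(x 0)) * h1
  · simp only [add_c, smul_c, inner2, rot_c0, rot_c1]
    linear_combination (-(x 1)) * h1

lemma unit_eq_or_neg {u v : E} (hu : ‖u‖ = 1) (hv : ‖v‖ = 1) (c : ℝ) (h : u = c • v) :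
    u = v ∨ u = -v := by
  have h2 := congrArg norm h
  rw [norm_smul, hu, hv, Real.norm_eq_abs, mul_one] at h2
  rcases (abs_eq (le_of_lt one_pos)).1 h2.symm with h1 | h1
  · left; rw [h, h1, one_smul]
  · right; rw [h, h1, neg_one_smul]

lemma pt_mem_latt (a b : ℤ) : pt a b ∈ latt := ⟨a, b, rfl⟩

lemma zero_eq_pt : (0 : E) = pt 0 0 := by apply ext2 <;> rfl

lemma zero_mem_latt : (0 : E) ∈ latt := ⟨0, 0, by push_cast; exact zero_eq_pt⟩

lemma latt_add {x y : E} (hx : x ∈ latt) (hy : y ∈ latt) : x + y ∈ latt := by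
  obtain ⟨a, b, rfl⟩ := hx; obtain ⟨c, d, rfl⟩ := hy
  exact ⟨a + c, b + d, by apply ext2 <;> simp only [add_c, pt0, pt1] <;> push_cast <;> ring⟩

lemma latt_neg {x : E} (hx : x ∈ latt) : -x ∈ latt := by
  obtain ⟨a, b, rfl⟩ := hx
  exact ⟨-a, -b, by apply ext2 <;> simp only [neg_c, pt0, pt1] <;> push_cast <;> ring⟩

lemma latt_sub {x y : E} (hx : x ∈ latt) (hy : y ∈ latt) : x - y ∈ latt := by
  rw [sub_eq_add_neg]; exact latt_add hx (latt_neg hy)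

lemma latt_rot {x : E} (hx : x ∈ latt) : rot x ∈ latt := by
  obtain ⟨a, b, rfl⟩ := hx
  exact ⟨-b, a, by apply ext2 <;> simp only [rot_c0, rot_c1, pt0, pt1] <;> push_cast <;> ring⟩

lemma latt_zsmul (m : ℤ) {x : E} (hx : x ∈ latt) : (m : ℝ) • x ∈ latt := by
  obtain ⟨a, b, rfl⟩ := hx
  exact ⟨m * a, m * b, by apply ext2 <;> simp only [smul_c, pt0, pt1] <;> push_cast <;> ring⟩

lemma inner_latt_int {x y : E} (hx : x ∈ latt) (hy : y ∈ latt) :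
    ∃ n : ℤ, (inner ℝ x y : ℝ) = n := by
  obtain ⟨a, b, rfl⟩ := hx; obtain ⟨c, d, rfl⟩ := hy
  exact ⟨a * c + b * d, by simp only [inner2, pt0, pt1]; push_cast; ring⟩

end Infra

section Model

variable {K : Set E} {s : ℝ}

lemma K_norm_le (hK : NiceK K) {x : E} (hx : x ∈ K) : ‖x‖ ≤ 1 := hK.normMax.2 ⟨x, hx, rfl⟩

lemma K_neg_mem (hK : NiceK K) {x : E} (hx : x ∈ K) : -x ∈ K := by
  have := hK.rotInv _ (hK.rotInv _ hx); rwa [rot_rot] at this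

lemma convex_comb3 {T : Set E} (hc : Convex ℝ T) {x y z : E} (hx : x ∈ T) (hy : y ∈ T)
    (hz : z ∈ T) {a b c : ℝ} (ha : 0 ≤ a) (hb : 0 ≤ b) (hcc : 0 ≤ c) (habc : a + b + c = 1) :
    a • x + b • y + c • z ∈ T := by
  rcases eq_or_lt_of_le (by linarith : (0:ℝ) ≤ a + b) with h | h
  · have ha0 : a = 0 := by linarith
    have hb0 : b = 0 := by linarith
    have hc1 : c = 1 := by linarith
    simpa [ha0, hb0, hc1] using hz
  · have hne : a + b ≠ 0 := ne_of_gt h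
    have h1 : a / (a + b) + b / (a + b) = 1 := by field_simp
    have hu : (a / (a + b)) • x + (b / (a + b)) • y ∈ T :=
      hc hx hy (by positivity) (by positivity) h1
    have h2 := hc hu hz (le_of_lt h) hcc habc
    have e1 : (a + b) * (a / (a + b)) = a := by field_simp
    have e2 : (a + b) * (b / (a + b)) = b := by field_simp
    rw [smul_add, smul_smul, smul_smul, e1, e2] at h2
    exact h2

lemma K_zero_mem (hK : NiceK K) : (0 : E) ∈ K := by
  obtain ⟨k₀, hk₀K, -⟩ := hK.normMax.1
  have h := hK.convex hk₀K (K_neg_mem hK hk₀K) (by norm_num : (0:ℝ) ≤ 1/2)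
    (by norm_num : (0:ℝ) ≤ 1/2) (by norm_num)
  rwa [smul_neg, add_neg_cancel] at h

lemma K_ball_mem (hK : NiceK K) {w : E} (hw : ‖w‖ ≤ 1/2) : w ∈ K := by
  obtain ⟨k₀, hk₀K, hk₀n⟩ := hK.normMax.1
  replace hk₀n : ‖k₀‖ = 1 := hk₀n
  have hrk : rot k₀ ∈ K := hK.rotInv _ hk₀K
  have hrkn : ‖rot k₀‖ = 1 := by rw [norm_rot]; exact hk₀n
  set α := (inner ℝ w k₀ : ℝ) with hαdef
  set β := (inner ℝ w (rot k₀) : ℝ) with hβdef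
  have hd := decomp2 k₀ hk₀n w
  have hα : |α| ≤ ‖w‖ := by
    calc |α| ≤ ‖w‖ * ‖k₀‖ := abs_real_inner_le_norm w k₀
    _ = ‖w‖ := by rw [hk₀n, mul_one]
  have hβ : |β| ≤ ‖w‖ := by
    calc |β| ≤ ‖w‖ * ‖rot k₀‖ := abs_real_inner_le_norm w (rot k₀)
    _ = ‖w‖ := by rw [hrkn, mul_one]
  obtain ⟨x', hx'K, hx'⟩ : ∃ x', x' ∈ K ∧ α • k₀ = |α| • x' := by
    rcases le_or_gt 0 α with h | h
    · exact ⟨k₀, hk₀K, by rw [abs_of_nonneg h]⟩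
    · exact ⟨-k₀, K_neg_mem hK hk₀K, by rw [abs_of_neg h, neg_smul, smul_neg, neg_neg]⟩
  obtain ⟨y', hy'K, hy'⟩ : ∃ y', y' ∈ K ∧ β • rot k₀ = |β| • y' := by
    rcases le_or_gt 0 β with h | h
    · exact ⟨rot k₀, hrk, by rw [abs_of_nonneg h]⟩
    · exact ⟨-(rot k₀), K_neg_mem hK hrk, by rw [abs_of_neg h, neg_smul, smul_neg, neg_neg]⟩
  have hcomb : w = |α| • x' + |β| • y' + (1 - |α| - |β|) • 0 := by
    rw [smul_zero, add_zero, ← hx', ← hy']; exact hd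
  rw [hcomb]
  exact convex_comb3 hK.convex hx'K hy'K (K_zero_mem hK) (abs_nonneg α) (abs_nonneg β)
    (by linarith) (by ring)

lemma Ks_norm_le (hK : NiceK K) (hs : 2 ≤ s) {k : E} (hk : k ∈ Ks K s) : ‖k‖ ≤ s := by
  obtain ⟨y, hy, rfl⟩ := mem_smul_set.1 hk.1
  rw [norm_smul, Real.norm_eq_abs, abs_of_pos (by linarith : (0:ℝ) < s)]
  have := K_norm_le hK hy
  nlinarith [norm_nonneg y]

lemma Ks_neg_mem (hK : NiceK K) {k : E} (hk : k ∈ Ks K s) : -k ∈ Ks K s := by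
  refine ⟨?_, latt_neg hk.2⟩
  obtain ⟨y, hy, hyk⟩ := mem_smul_set.1 hk.1
  exact mem_smul_set.2 ⟨-y, K_neg_mem hK hy, by rw [smul_neg, hyk]⟩

lemma Ks_zero_mem (hK : NiceK K) : (0:E) ∈ Ks K s :=
  ⟨mem_smul_set.2 ⟨0, K_zero_mem hK, smul_zero s⟩, zero_mem_latt⟩

lemma Ks_unitY (hK : NiceK K) (hs : 2 ≤ s) :
    pt 0 1 ∈ Ks K s ∧ pt 0 (-1) ∈ Ks K s := by
  have hs0 : (0:ℝ) < s := by linarith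
  have hnorm : ‖pt 0 (1/s)‖ = 1/s := by
    rw [norm2, pt0, pt1]
    have h' : (0:ℝ)^2 + (1/s)^2 = (1/s)^2 := by ring
    rw [h', Real.sqrt_sq (by positivity)]
  have h1 : pt 0 (1/s) ∈ K := K_ball_mem hK (by rw [hnorm]; exact
    (one_div_le_one_div_of_le (by norm_num) hs).trans (by norm_num))
  have h2 : pt 0 (-(1/s)) ∈ K := by
    have := K_neg_mem hK h1
    have e : -(pt 0 (1/s)) = pt 0 (-(1/s)) := by apply ext2 <;> simp [neg_c, pt0, pt1]
    rwa [e] at this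
  constructor
  · refine ⟨mem_smul_set.2 ⟨pt 0 (1/s), h1, ?_⟩, ⟨0, 1, by norm_num⟩⟩
    apply ext2 <;> simp only [smul_c, pt0, pt1, mul_zero] <;> field_simp
  · refine ⟨mem_smul_set.2 ⟨pt 0 (-(1/s)), h2, ?_⟩, ⟨0, -1, by norm_num⟩⟩
    apply ext2 <;> simp only [smul_c, pt0, pt1, mul_zero] <;> push_cast <;> field_simp

lemma Ks_finite (hK : NiceK K) (hs : 2 ≤ s) : (Ks K s).Finite := by
  apply Set.Finite.subset (Set.Finite.image (fun p : ℤ × ℤ => pt p.1 p.2)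
    (Set.finite_Icc (⟨-⌈s⌉, -⌈s⌉⟩ : ℤ × ℤ) ⟨⌈s⌉, ⌈s⌉⟩))
  intro k hk
  obtain ⟨a, b, hab⟩ := hk.2
  subst hab
  refine ⟨(a, b), ?_, rfl⟩
  have hn := Ks_norm_le hK hs hk
  have h0 : |(a:ℝ)| ≤ s := by
    have := abs_coord_le (pt (a:ℝ) b) 0; rw [pt0] at this; linarith
  have h1 : |(b:ℝ)| ≤ s := by
    have := abs_coord_le (pt (a:ℝ) b) 1; rw [pt1] at this; linarith
  have ha : |a| ≤ ⌈s⌉ := by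
    have : ((|a| : ℤ) : ℝ) ≤ (⌈s⌉ : ℝ) := by
      rw [← Int.cast_abs] at h0; exact h0.trans (Int.le_ceil s)
    exact_mod_cast this
  have hb : |b| ≤ ⌈s⌉ := by
    have : ((|b| : ℤ) : ℝ) ≤ (⌈s⌉ : ℝ) := by
      rw [← Int.cast_abs] at h1; exact h1.trans (Int.le_ceil s)
    exact_mod_cast this
  rw [Set.mem_Icc]
  exact ⟨⟨(abs_le.1 ha).1, (abs_le.1 hb).1⟩, ⟨(abs_le.1 ha).2, (abs_le.1 hb).2⟩⟩

end Model

section QS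

variable {s : ℝ}

lemma qs_unit {u : E} (hu : u ∈ quasiStable s) : ‖u‖ = 1 := hu.1

lemma qs_witness {u : E} (hu : u ∈ quasiStable s) (hs : 2 ≤ s) :
    ∃ (a b : ℤ) (c : ℝ), 0 < c ∧ c ≤ 2 * s ∧ |(a:ℝ)| ≤ s ∧ |(b:ℝ)| ≤ s ∧
      pt (a:ℝ) (b:ℝ) = c • u := by
  obtain ⟨hn, a, b, ha, hb, hz, c, hc⟩ := hu
  have hc0 : c ≠ 0 := by rintro rfl; rw [zero_smul] at hc; exact hz hc
  have hnorm : ‖pt (a:ℝ) b‖ ≤ 2 * s := by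
    have h := norm_le_abs2 (pt (a:ℝ) b); rw [pt0, pt1] at h; linarith
  have hnc : ‖pt (a:ℝ) b‖ = |c| := by
    rw [hc, norm_smul, hn, Real.norm_eq_abs, mul_one]
  rcases lt_or_gt_of_ne hc0 with h | h
  · refine ⟨-a, -b, -c, by linarith, ?_, ?_, ?_, ?_⟩
    · rw [hnc, abs_of_neg h] at hnorm; linarith
    · push_cast; rw [abs_neg]; exact ha
    · push_cast; rw [abs_neg]; exact hb
    · have e : pt ((-a : ℤ) : ℝ) ((-b : ℤ) : ℝ) = -(pt (a:ℝ) (b:ℝ)) := by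
        apply ext2 <;> simp only [neg_c, pt0, pt1] <;> push_cast <;> ring
      rw [e, hc, neg_smul]
  · refine ⟨a, b, c, h, ?_, ha, hb, hc⟩
    rw [hnc, abs_of_pos h] at hnorm; linarith

lemma inner_qs_lb {k u : E} (hk : k ∈ latt) (hu : u ∈ quasiStable s) (hs : 2 ≤ s)
    (h : (inner ℝ k u : ℝ) ≠ 0) : 1 / (2*s) ≤ |(inner ℝ k u : ℝ)| := by
  obtain ⟨a, b, c, hc0, hc2s, -, -, hz⟩ := qs_witness hu hs
  obtain ⟨n, hn⟩ := inner_latt_int hk (pt_mem_latt a b)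
  have h2 : (inner ℝ k (pt (a:ℝ) b) : ℝ) = c * (inner ℝ k u : ℝ) := by
    rw [hz, real_inner_smul_right]
  have hne : n ≠ 0 := by
    rintro rfl
    rw [h2] at hn
    push_cast at hn
    rcases mul_eq_zero.1 hn with h' | h'
    · linarith
    · exact h h'
  have h1 : (1:ℝ) ≤ |(n:ℝ)| := by
    rw [← Int.cast_abs]; exact_mod_cast Int.one_le_abs hne
  have h3 : |(n:ℝ)| = c * |(inner ℝ k u : ℝ)| := by
    rw [← hn, h2, abs_mul, abs_of_pos hc0]
  rw [div_le_iff₀ (by linarith : (0:ℝ) < 2*s)]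
  nlinarith [abs_nonneg (inner ℝ k u : ℝ), mul_nonneg (sub_nonneg.2 hc2s) (abs_nonneg (inner ℝ k u : ℝ))]

lemma qs_rot {u : E} (hu : u ∈ quasiStable s) : rot u ∈ quasiStable s := by
  obtain ⟨hn, a, b, ha, hb, hz, c, hc⟩ := hu
  refine ⟨by rw [norm_rot]; exact hn, -b, a, by push_cast; rw [abs_neg]; exact hb, ha, ?_, c, ?_⟩
  · intro h
    apply hz
    have h0 : ((-b : ℤ) : ℝ) = 0 := by
      have := congrArg (fun w : E => w 0) h; simpa [pt0, zero_c] using this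
    have h1 : ((a : ℤ) : ℝ) = 0 := by
      have := congrArg (fun w : E => w 1) h; simpa [pt1, zero_c] using this
    have hb0 : ((b : ℤ) : ℝ) = 0 := by push_cast at h0; linarith
    rw [h1, hb0, ← zero_eq_pt]
  · have e : pt ((-b : ℤ) : ℝ) ((a : ℤ) : ℝ) = rot (pt (a:ℝ) (b:ℝ)) := by
      apply ext2 <;> simp only [rot_c0, rot_c1, pt0, pt1] <;> push_cast <;> ring
    rw [e, hc, rot_smul]

lemma sep_qs (hs : 2 ≤ s) {u v' : E} (hu : u ∈ quasiStable s) (hv : v' ∈ quasiStable s)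
    (h1 : v' ≠ u) (h2 : v' ≠ -u) : 1 / (4*s^2) ≤ |(inner ℝ (rot u) v' : ℝ)| := by
  have hun := qs_unit hu
  have hvn := qs_unit hv
  obtain ⟨a, b, c, hc0, hc2s, -, -, hz⟩ := qs_witness hu hs
  obtain ⟨a2, b2, c2, hc20, hc22s, -, -, hz2⟩ := qs_witness hv hs
  have hne : (inner ℝ (rot u) v' : ℝ) ≠ 0 := by
    intro h0
    have hd := decomp2 u hun v'
    have h0' : (inner ℝ v' (rot u) : ℝ) = 0 := by rw [real_inner_comm]; exact h0
    rw [h0', zero_smul, add_zero] at hd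
    rcases unit_eq_or_neg hvn hun _ hd with h | h
    · exact h1 h
    · exact h2 h
  obtain ⟨n, hn⟩ := inner_latt_int (latt_rot (pt_mem_latt a b)) (pt_mem_latt a2 b2)
  have heq : (inner ℝ (rot (pt (a:ℝ) b)) (pt (a2:ℝ) b2) : ℝ)
      = (c * c2) * (inner ℝ (rot u) v' : ℝ) := by
    rw [hz, hz2, rot_smul, real_inner_smul_left, real_inner_smul_right]; ring
  have hcc0 : 0 < c * c2 := mul_pos hc0 hc20
  have hne2 : n ≠ 0 := by
    rintro rfl
    rw [heq] at hn
    push_cast at hn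
    rcases mul_eq_zero.1 hn with h' | h'
    · linarith
    · exact hne h'
  have h1' : (1:ℝ) ≤ |(n:ℝ)| := by
    rw [← Int.cast_abs]; exact_mod_cast Int.one_le_abs hne2
  have h3 : |(n:ℝ)| = (c * c2) * |(inner ℝ (rot u) v' : ℝ)| := by
    rw [← hn, heq, abs_mul, abs_of_pos hcc0]
  have hcc4 : c * c2 ≤ 4 * s^2 := by nlinarith
  rw [div_le_iff₀ (by positivity)]
  nlinarith [abs_nonneg (inner ℝ (rot u) v' : ℝ),
    mul_le_mul_of_nonneg_right hcc4 (abs_nonneg (inner ℝ (rot u) v' : ℝ))]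

lemma smul_mem_qs (a b : ℤ) (ha : |(a:ℝ)| ≤ s) (hb : |(b:ℝ)| ≤ s)
    (hx0 : pt (a:ℝ) (b:ℝ) ≠ 0) (t : ℝ) (ht : t ≠ 0)
    (hunit : ‖t • pt (a:ℝ) (b:ℝ)‖ = 1) : t • pt (a:ℝ) (b:ℝ) ∈ quasiStable s :=
  ⟨hunit, a, b, ha, hb, hx0, t⁻¹, by rw [smul_smul, inv_mul_cancel₀ ht, one_smul]⟩

end QS

section Droplet

lemma D_subset_ehs_tight (D : Set E) (u : E) : D ⊆ ehs u (tight D u) := by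
  intro x hx
  show (((inner ℝ x u : ℝ) : ℝ) : EReal) ≤ tight D u
  exact le_sSup (Set.mem_image_of_mem _ hx)

lemma droplet_eq_tight {s : ℝ} {D : Set E} (hD : IsDropletQ s D) :
    D = ⋂ u ∈ quasiStable s, ehs u (tight D u) := by
  obtain ⟨l, hl⟩ := hD
  apply Set.Subset.antisymm
  · intro x hx
    exact Set.mem_iInter₂.2 fun u _ => D_subset_ehs_tight D u hx
  · intro x hx
    rw [hl]
    apply Set.mem_iInter₂.2
    intro u hu
    have h1 : tight D u ≤ l u := by
      apply sSup_le
      rintro a ⟨y, hy, rfl⟩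
      have h2 : y ∈ ehs u (l u) := by
        rw [hl] at hy; exact Set.mem_iInter₂.1 hy u hu
      exact h2
    exact le_trans (Set.mem_iInter₂.1 hx u hu) h1

lemma nondeg_tight {K : Set E} {s C : ℝ} (hC1 : 1 ≤ C) {r : ℕ} {D : Set E}
    (hND : IsNondeg s C (Ks K s) r D) {u : E} (hu : u ∈ quasiStable s) :
    ∃ T : ℝ, (∀ y ∈ D, (inner ℝ y u : ℝ) ≤ T) ∧ tight D u = (T : EReal) ∧
      ∃ p₁ ∈ D, ∃ p₂ ∈ D, (inner ℝ p₁ u : ℝ) = T ∧ (inner ℝ p₂ u : ℝ) = T ∧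
        C ^ ((1:ℝ)/3) - 1 ≤ dist p₁ p₂ := by
  have hdiam : C ^ ((1:ℝ)/3) ≤ Metric.diam (uside u D) := by
    by_cases hstab : u ∈ stableDirs (Ks K s) r
    · exact le_trans (Real.rpow_le_rpow_of_exponent_le hC1 (by norm_num)) ((hND.2 u hu).2 hstab)
    · exact (hND.2 u hu).1 hstab
  have hL1 : (1:ℝ) ≤ C ^ ((1:ℝ)/3) := Real.one_le_rpow hC1 (by norm_num)
  have hpair : ∃ p₁ ∈ uside u D, ∃ p₂ ∈ uside u D, C ^ ((1:ℝ)/3) - 1 ≤ dist p₁ p₂ := by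
    by_contra hcon
    push_neg at hcon
    have : Metric.diam (uside u D) ≤ C ^ ((1:ℝ)/3) - 1 :=
      Metric.diam_le_of_forall_dist_le (by linarith)
        (fun x hx y hy => le_of_lt (hcon x hx y hy))
    linarith
  obtain ⟨p₁, hp₁, p₂, hp₂, hdist⟩ := hpair
  refine ⟨(inner ℝ p₁ u : ℝ), fun y hy => hp₁.2 y hy, ?_, p₁, hp₁.1, p₂, hp₂.1, rfl, ?_, hdist⟩
  · apply le_antisymm
    · exact sSup_le (by rintro a ⟨y, hy, rfl⟩; exact EReal.coe_le_coe_iff.2 (hp₁.2 y hy))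
    · exact le_sSup ⟨p₁, hp₁.1, rfl⟩
  · exact le_antisymm (hp₁.2 p₂ hp₂.1) (hp₂.2 p₁ hp₁.1)

set_option maxHeartbeats 2000000 in
lemma claimA {K : Set E} (hK : NiceK K) {s : ℝ} (hs : 2 ≤ s) {C : ℝ} (hC1 : 1 ≤ C)
    (hC : 15 * (s+1)^5 ≤ C ^ ((1:ℝ)/3)) {v : E} (hv : v ∈ quasiStable s)
    {D D' : Set E} (hND : IsNondeg s C (Ks K s) (rKs K s) D)
    (hExt : IsExtension s v D D') :
    ∀ y ∈ (D' \ D) ∩ latt, ∀ k ∈ Ks K s, (inner ℝ k v : ℝ) < 0 → y + k ∈ D := by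
  have hs0 : (0:ℝ) < s := by linarith
  set L : ℝ := C ^ ((1:ℝ)/3) with hLdef
  obtain ⟨Tv, hTvub, hTveq, pv₁, hpv₁D, pv₂, hpv₂D, hpv₁, hpv₂, hpvdist⟩ :=
    nondeg_tight hC1 hND hv
  obtain ⟨l', hl'gt, hD'eq, hNE, hmin⟩ := hExt
  have hmemD' : ∀ x ∈ D', ∀ u ∈ quasiStable s, u ≠ v →
      ((inner ℝ x u : ℝ) : EReal) ≤ tight D u := by
    intro x hx u hu hne
    rw [hD'eq] at hx
    exact Set.mem_iInter₂.1 hx.1 u ⟨hu, hne⟩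
  have hmemD'v : ∀ x ∈ D', ((inner ℝ x v : ℝ) : EReal) ≤ l' := by
    intro x hx; rw [hD'eq] at hx; exact hx.2
  have mem_ext : ∀ (x : E) (m : EReal),
      (∀ u ∈ quasiStable s, u ≠ v → ((inner ℝ x u : ℝ) : EReal) ≤ tight D u) →
      ((inner ℝ x v : ℝ) : EReal) ≤ m → x ∈ extDroplet s v D m := by
    intro x m h1 h2
    exact ⟨Set.mem_iInter₂.2 fun u hu => h1 u hu.1 hu.2, h2⟩
  have hnotD : ∀ x, x ∉ D →
      (∀ u ∈ quasiStable s, u ≠ v → ((inner ℝ x u : ℝ) : EReal) ≤ tight D u) →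
      Tv < (inner ℝ x v : ℝ) := by
    intro x hxD hothers
    by_contra hcon
    push_neg at hcon
    apply hxD
    rw [droplet_eq_tight hND.1]
    apply Set.mem_iInter₂.2
    intro u hu
    by_cases hne : u = v
    · subst hne
      show ((inner ℝ x u : ℝ) : EReal) ≤ tight D u
      rw [hTveq]; exact_mod_cast hcon
    · exact hothers u hu hne
  intro y hy k hkK hkv
  obtain ⟨⟨hyD', hyD⟩, hylatt⟩ := hy
  have hyv_gt : Tv < (inner ℝ y v : ℝ) :=
    hnotD y hyD (fun u hu hne => hmemD' y hyD' u hu hne)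
  obtain ⟨z₀, hz₀⟩ := hNE
  have hl'le : l' ≤ ((inner ℝ z₀ v : ℝ) : EReal) := by
    apply hmin
    · rw [hTveq]
      exact_mod_cast hnotD z₀ hz₀.1.2 (fun u hu hne => hmemD' z₀ hz₀.1.1 u hu hne)
    · exact ⟨z₀, ⟨mem_ext z₀ _ (fun u hu hne => hmemD' z₀ hz₀.1.1 u hu hne) le_rfl,
        hz₀.1.2⟩, hz₀.2⟩
  obtain ⟨lR, hlR⟩ : ∃ lR : ℝ, l' = (lR : EReal) := by
    have hbot : l' ≠ ⊥ := by
      intro h; rw [h] at hl'gt; exact not_lt_bot hl'gt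
    have htop : l' ≠ ⊤ := by
      intro h; rw [h] at hl'le; exact EReal.coe_ne_top _ (top_le_iff.1 hl'le)
    exact ⟨l'.toReal, (EReal.coe_toReal htop hbot).symm⟩
  have hyv_le : (inner ℝ y v : ℝ) ≤ lR := by
    have := hmemD'v y hyD'; rw [hlR] at this; exact_mod_cast this
  have hkn : ‖k‖ ≤ s := Ks_norm_le hK hs hkK
  have hknlatt : k ∈ latt := hkK.2
  have hk0 : k ≠ 0 := by
    rintro rfl; rw [inner_zero_left] at hkv; exact lt_irrefl 0 hkv
  -- all sides other than v are fine
  have sideOK : ∀ u ∈ quasiStable s, u ≠ v →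
      ((inner ℝ (y + k) u : ℝ) : EReal) ≤ tight D u := by
    intro u hu hne
    obtain ⟨Tu, hTuub, hTueq, q₁, hq₁D, q₂, hq₂D, hq₁u, hq₂u, hqdist⟩ := nondeg_tight hC1 hND hu
    rw [hTueq, EReal.coe_le_coe_iff, inner_add_left]
    have hyu : (inner ℝ y u : ℝ) ≤ Tu := by
      have := hmemD' y hyD' u hu hne; rw [hTueq] at this; exact_mod_cast this
    rcases le_or_gt ((inner ℝ k u : ℝ)) 0 with hku | hku
    · linarith
    have hknv : (inner ℝ k v : ℝ) ≤ s ∧ -(inner ℝ k v : ℝ) ≤ s ∧ (inner ℝ k u : ℝ) ≤ s := by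
      have h1 := abs_real_inner_le_norm k v
      have h2 := abs_real_inner_le_norm k u
      rw [qs_unit hv, mul_one] at h1
      rw [qs_unit hu, mul_one] at h2
      have h3 := abs_le.1 (h1.trans hkn)
      have h4 := abs_le.1 (h2.trans hkn)
      exact ⟨h3.2, by linarith [h3.1], h4.2⟩
    by_cases hnegv : u = -v
    · -- the -v side : use the width of D in direction v
      obtain ⟨Tr, hTrub, hTreq, p₁, hp₁D, p₂, hp₂D, hp₁r, hp₂r, hpdist⟩ :=
        nondeg_tight hC1 hND (qs_rot hv)
      have hdr : (inner ℝ (p₁ - p₂) (rot v) : ℝ) = 0 := by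
        rw [inner_sub_left, hp₁r, hp₂r, sub_self]
      have hdd := decomp2 (rot v) (by rw [norm_rot]; exact qs_unit hv) (p₁ - p₂)
      rw [hdr, zero_smul, zero_add, rot_rot] at hdd
      -- p₁ - p₂ = (inner ℝ (p₁-p₂) (-v)) • (-v)
      have hnormd : ‖p₁ - p₂‖ = |(inner ℝ (p₁ - p₂) v : ℝ)| := by
        conv_lhs => rw [hdd]
        rw [norm_smul, Real.norm_eq_abs, norm_neg, qs_unit hv, mul_one, inner_neg_right, abs_neg]
      have hdge : L - 1 ≤ |(inner ℝ (p₁ - p₂) v : ℝ)| := by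
        rw [← hnormd, ← dist_eq_norm]; exact hpdist
      have hlow : ∃ p ∈ D, (inner ℝ p v : ℝ) ≤ Tv - (L - 1) := by
        rcases le_or_gt ((inner ℝ (p₁ - p₂) v : ℝ)) 0 with hc | hc
        · refine ⟨p₁, hp₁D, ?_⟩
          have := hTvub p₂ hp₂D
          rw [inner_sub_left] at hc hdge
          rcases abs_cases ((inner ℝ p₁ v : ℝ) - (inner ℝ p₂ v : ℝ)) with ⟨he, _⟩ | ⟨he, _⟩ <;>
            linarith
        · refine ⟨p₂, hp₂D, ?_⟩
          have := hTvub p₁ hp₁D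
          rw [inner_sub_left] at hc hdge
          rcases abs_cases ((inner ℝ p₁ v : ℝ) - (inner ℝ p₂ v : ℝ)) with ⟨he, _⟩ | ⟨he, _⟩ <;>
            linarith
      obtain ⟨p, hpD, hp⟩ := hlow
      have hTulow : -Tv + (L - 1) ≤ Tu := by
        have h2 := hTuub p hpD
        rw [hnegv, inner_neg_right] at h2
        linarith
      have hLs : s + 1 ≤ L := by
        have h3 : (s+1) ≤ (s+1)^5 := le_self_pow₀ (by linarith) (by norm_num)
        have h4 : (0:ℝ) ≤ (s+1)^5 := by positivity
        linarith
      rw [hnegv, inner_neg_right, inner_neg_right]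
      linarith [hknv.2.1]
    · -- the generic side: deficit argument
      by_contra hexc
      push_neg at hexc
      have hyu_gt : Tu - s < (inner ℝ y u : ℝ) := by linarith [hknv.2.2]
      obtain ⟨z, hzdef⟩ : ∃ z : E, z = (inner ℝ k u : ℝ) • v + (-(inner ℝ k v : ℝ)) • u := ⟨_, rfl⟩
      have hzk : (inner ℝ z k : ℝ) = 0 := by
        rw [hzdef, inner_add_left, real_inner_smul_left, real_inner_smul_left]
        simp only [inner2]; ring
      have hz0 : z ≠ 0 := by
        intro h0
        have h1 : (inner ℝ k u : ℝ) • v = -((-(inner ℝ k v : ℝ)) • u) :=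
          eq_neg_of_add_eq_zero_left (by rw [← hzdef]; exact h0)
        have h2 : v = ((inner ℝ k u : ℝ)⁻¹ * (inner ℝ k v : ℝ)) • u := by
          calc v = (inner ℝ k u : ℝ)⁻¹ • ((inner ℝ k u : ℝ) • v) :=
                (inv_smul_smul₀ (ne_of_gt hku) v).symm
          _ = (inner ℝ k u : ℝ)⁻¹ • (-((-(inner ℝ k v : ℝ)) • u)) := by rw [h1]
          _ = ((inner ℝ k u : ℝ)⁻¹ * (inner ℝ k v : ℝ)) • u := by
                rw [neg_smul, neg_neg, smul_smul]
        rcases unit_eq_or_neg (qs_unit hv) (qs_unit hu) _ h2 with h | h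
        · exact hne h.symm
        · exact hnegv (by rw [h, neg_neg])
      have hznorm : ‖z‖ ≠ 0 := norm_ne_zero_iff.2 hz0
      have hkhat : ‖(‖k‖⁻¹ • k)‖ = 1 := norm_smul_inv_norm hk0
      have hdz := decomp2 (‖k‖⁻¹ • k) hkhat z
      have h01 : (inner ℝ z (‖k‖⁻¹ • k) : ℝ) = 0 := by
        rw [real_inner_smul_right, hzk, mul_zero]
      rw [h01, zero_smul, zero_add, rot_smul, smul_smul] at hdz
      have ht0 : (inner ℝ z (‖k‖⁻¹ • rot k) : ℝ) * ‖k‖⁻¹ ≠ 0 := by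
        intro h; rw [h, zero_smul] at hdz; exact hz0 hdz
      obtain ⟨ka, kb, hkab⟩ := id hknlatt
      have hrk_coords : rot k = pt ((-kb : ℤ) : ℝ) ((ka : ℤ) : ℝ) := by
        rw [hkab]; apply ext2 <;> simp only [rot_c0, rot_c1, pt0, pt1] <;> push_cast <;> ring
      obtain ⟨w, hwdef⟩ : ∃ w : E, w = ‖z‖⁻¹ • z := ⟨_, rfl⟩
      have hwpt : w = (‖z‖⁻¹ * ((inner ℝ z (‖k‖⁻¹ • rot k) : ℝ) * ‖k‖⁻¹)) •
          pt ((-kb : ℤ) : ℝ) ((ka : ℤ) : ℝ) := by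
        rw [hwdef, ← hrk_coords, ← smul_smul, ← hdz]
      have hwQ : w ∈ quasiStable s := by
        rw [hwpt]
        apply smul_mem_qs
        · have h := abs_coord_le (rot k) 0
          rw [norm_rot] at h
          rw [hrk_coords, pt0] at h
          linarith [h.trans hkn]
        · have h := abs_coord_le (rot k) 1
          rw [norm_rot] at h
          rw [hrk_coords, pt1] at h
          linarith [h.trans hkn]
        · rw [← hrk_coords]; exact rot_ne_zero hk0
        · exact mul_ne_zero (inv_ne_zero hznorm) ht0
        · rw [← hwpt, hwdef]
          exact norm_smul_inv_norm hz0
      have hzw : z = ‖z‖ • w := by rw [hwdef, smul_inv_smul₀ hznorm]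
      have hwv : w ≠ v := by
        intro h
        have hz2 : z = ‖z‖ • v := by rw [← h]; exact hzw
        have h3 : (-(inner ℝ k v : ℝ)) • u = (‖z‖ - (inner ℝ k u : ℝ)) • v := by
          have h3a : (-(inner ℝ k v : ℝ)) • u = z - (inner ℝ k u : ℝ) • v := by
            rw [hzdef]; abel
          rw [h3a, sub_smul]
          conv_lhs => rw [hz2]
        have h4 : u = ((-(inner ℝ k v : ℝ))⁻¹ * (‖z‖ - (inner ℝ k u : ℝ))) • v := by
          have hn0 : (-(inner ℝ k v : ℝ)) ≠ 0 := by
            intro hh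
            rw [← neg_neg (inner ℝ k v : ℝ), hh, neg_zero] at hkv
            exact lt_irrefl 0 hkv
          calc u = (-(inner ℝ k v : ℝ))⁻¹ • ((-(inner ℝ k v : ℝ)) • u) :=
              (inv_smul_smul₀ hn0 u).symm
          _ = (-(inner ℝ k v : ℝ))⁻¹ • ((‖z‖ - (inner ℝ k u : ℝ)) • v) := by rw [h3]
          _ = ((-(inner ℝ k v : ℝ))⁻¹ * (‖z‖ - (inner ℝ k u : ℝ))) • v := smul_smul _ _ _
        rcases unit_eq_or_neg (qs_unit hu) (qs_unit hv) _ h4 with h5 | h5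
        · exact hne h5
        · exact hnegv h5
      obtain ⟨Tw, hTwub, hTweq, p₁, hp₁D, p₂, hp₂D, hp₁w, hp₂w, hpdist⟩ :=
        nondeg_tight hC1 hND hwQ
      have hyw : (inner ℝ y w : ℝ) ≤ Tw := by
        have := hmemD' y hyD' w hwQ hwv; rw [hTweq] at this; exact_mod_cast this
      have key : ∀ p, p ∈ D → (inner ℝ p w : ℝ) = Tw →
          (inner ℝ k u : ℝ) * ((inner ℝ y v : ℝ) - (inner ℝ p v : ℝ))
            + (-(inner ℝ k v : ℝ)) * ((inner ℝ y u : ℝ) - (inner ℝ p u : ℝ)) ≤ 0 := by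
        intro p hpD hpw
        have h5 : (inner ℝ (y - p) z : ℝ) = ‖z‖ * ((inner ℝ y w : ℝ) - (inner ℝ p w : ℝ)) := by
          conv_lhs => rw [hzw]
          rw [real_inner_smul_right, inner_sub_left]
        have h6 : (inner ℝ (y - p) z : ℝ) ≤ 0 := by
          rw [h5, hpw]
          have h7 : (inner ℝ y w : ℝ) - Tw ≤ 0 := by linarith
          nlinarith [norm_nonneg z]
        have h8 : (inner ℝ (y - p) z : ℝ) =
            (inner ℝ k u : ℝ) * ((inner ℝ y v : ℝ) - (inner ℝ p v : ℝ))
            + (-(inner ℝ k v : ℝ)) * ((inner ℝ y u : ℝ) - (inner ℝ p u : ℝ)) := by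
          rw [hzdef, inner_add_right, real_inner_smul_right, real_inner_smul_right,
            inner_sub_left, inner_sub_left]
        rw [h8] at h6
        exact h6
      have hα₁lb : 1/(2*s) ≤ (inner ℝ k u : ℝ) := by
        have := inner_qs_lb hknlatt hu hs (ne_of_gt hku)
        rwa [abs_of_pos hku] at this
      have hbound : ∀ p, p ∈ D → (inner ℝ p w : ℝ) = Tw →
          0 < (inner ℝ y v : ℝ) - (inner ℝ p v : ℝ) ∧
          (inner ℝ y v : ℝ) - (inner ℝ p v : ℝ) ≤ 2*s^3 ∧
          -s < (inner ℝ y u : ℝ) - (inner ℝ p u : ℝ) ∧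
          (inner ℝ y u : ℝ) - (inner ℝ p u : ℝ) < 0 := by
        intro p hpD hpw
        have hA : 0 < (inner ℝ y v : ℝ) - (inner ℝ p v : ℝ) := by
          have := hTvub p hpD; linarith
        have hkey := key p hpD hpw
        have hα₂pos : 0 < -(inner ℝ k v : ℝ) := by linarith
        have hB0 : (inner ℝ y u : ℝ) - (inner ℝ p u : ℝ) < 0 := by nlinarith
        have hBs : -s < (inner ℝ y u : ℝ) - (inner ℝ p u : ℝ) := by
          have := hTuub p hpD; linarith
        have hA2 : (inner ℝ y v : ℝ) - (inner ℝ p v : ℝ) ≤ 2*s^3 := by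
          have h8 : (inner ℝ k u : ℝ) * ((inner ℝ y v : ℝ) - (inner ℝ p v : ℝ)) ≤ s * s := by
            nlinarith [hknv.2.1]
          have hα₁lb' : 1 ≤ 2*s*(inner ℝ k u : ℝ) := by
            rw [div_le_iff₀ (by linarith : (0:ℝ) < 2*s)] at hα₁lb
            linarith
          nlinarith [h8, mul_le_mul_of_nonneg_right hα₁lb' (le_of_lt hA),
            mul_le_mul_of_nonneg_left h8 (by linarith : (0:ℝ) ≤ 2*s)]
        exact ⟨hA, hA2, hBs, hB0⟩
      obtain ⟨hA1, hA1u, hB1l, hB1u⟩ := hbound p₁ hp₁D hp₁w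
      obtain ⟨hA2, hA2u, hB2l, hB2u⟩ := hbound p₂ hp₂D hp₂w
      have hdv : |(inner ℝ (p₁ - p₂) v : ℝ)| ≤ 2*s^3 := by
        rw [inner_sub_left, abs_le]; constructor <;> linarith
      have hdu : |(inner ℝ (p₁ - p₂) u : ℝ)| ≤ s := by
        rw [inner_sub_left, abs_le]; constructor <;> linarith
      have hsep : 1 / (4*s^2) ≤ |(inner ℝ (rot v) u : ℝ)| :=
        sep_qs hs hv hu hne hnegv
      have hdd := decomp2 v (qs_unit hv) (p₁ - p₂)
      have hexp : (inner ℝ (p₁ - p₂) u : ℝ)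
          = (inner ℝ (p₁ - p₂) v : ℝ) * (inner ℝ v u : ℝ)
            + (inner ℝ (p₁ - p₂) (rot v) : ℝ) * (inner ℝ (rot v) u : ℝ) := by
        conv_lhs => rw [hdd]
        rw [inner_add_left, real_inner_smul_left, real_inner_smul_left]
      have hvu : |(inner ℝ v u : ℝ)| ≤ 1 := by
        have := abs_real_inner_le_norm v u
        rw [qs_unit hv, qs_unit hu] at this
        simpa using this
      have hdrv : |(inner ℝ (p₁ - p₂) (rot v) : ℝ)| ≤ 4*s^2 * (2*s^3 + s) := by
        have h9 : |(inner ℝ (p₁ - p₂) (rot v) : ℝ) * (inner ℝ (rot v) u : ℝ)| ≤ s + 2*s^3 := by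
          have he : (inner ℝ (p₁ - p₂) (rot v) : ℝ) * (inner ℝ (rot v) u : ℝ)
              = (inner ℝ (p₁ - p₂) u : ℝ) - (inner ℝ (p₁ - p₂) v : ℝ) * (inner ℝ v u : ℝ) := by
            linarith [hexp]
          rw [he, sub_eq_add_neg]
          refine (abs_add_le _ _).trans ?_
          rw [abs_neg, abs_mul]
          nlinarith [abs_nonneg ((inner ℝ (p₁ - p₂) v : ℝ)), abs_nonneg ((inner ℝ v u : ℝ)),
            mul_le_mul hdv hvu (abs_nonneg _) (by linarith [abs_nonneg ((inner ℝ (p₁-p₂) v : ℝ))] : (0:ℝ) ≤ 2*s^3)]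
        rw [abs_mul] at h9
        have hsep' : 1 ≤ 4*s^2 * |(inner ℝ (rot v) u : ℝ)| := by
          rw [div_le_iff₀ (by positivity : (0:ℝ) < 4*s^2)] at hsep
          linarith
        nlinarith [abs_nonneg ((inner ℝ (p₁ - p₂) (rot v) : ℝ)),
          mul_le_mul_of_nonneg_right hsep' (abs_nonneg ((inner ℝ (p₁ - p₂) (rot v) : ℝ))),
          mul_le_mul_of_nonneg_left h9 (by positivity : (0:ℝ) ≤ 4*s^2)]
      have hnd : ‖p₁ - p₂‖ ≤ |(inner ℝ (p₁ - p₂) v : ℝ)| + |(inner ℝ (p₁ - p₂) (rot v) : ℝ)| := by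
        conv_lhs => rw [hdd]
        refine (norm_add_le _ _).trans ?_
        rw [norm_smul, norm_smul, Real.norm_eq_abs, Real.norm_eq_abs, qs_unit hv,
          norm_rot, qs_unit hv, mul_one, mul_one]
      rw [dist_eq_norm] at hpdist
      have hfin : L ≤ 2*s^3 + 4*s^2*(2*s^3 + s) + 1 := by linarith
      have hpow : s^5 ≤ (s+1)^5 := by
        apply pow_le_pow_left₀ (by linarith) (by linarith)
      nlinarith [pow_pos hs0 3, pow_pos hs0 5, sq_nonneg s,
        mul_pos (pow_pos hs0 3) (by nlinarith : (0:ℝ) < s^2 - 2)]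
  -- now the v side
  rcases le_or_gt ((inner ℝ (y + k) v : ℝ)) Tv with hvcase | hvcase
  · rw [droplet_eq_tight hND.1]
    apply Set.mem_iInter₂.2
    intro u hu
    by_cases hne : u = v
    · subst hne
      show ((inner ℝ (y + k) u : ℝ) : EReal) ≤ tight D u
      rw [hTveq]; exact_mod_cast hvcase
    · exact sideOK u hu hne
  · exfalso
    have hm1 : tight D v < ((inner ℝ (y + k) v : ℝ) : EReal) := by
      rw [hTveq]; exact_mod_cast hvcase
    have hnotDyk : y + k ∉ D := by
      intro hcontra
      have h := D_subset_ehs_tight D v hcontra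
      rw [hTveq] at h
      exact absurd (EReal.coe_le_coe_iff.1 h) (not_le.2 hvcase)
    have hm2 : ((extDroplet s v D (((inner ℝ (y + k) v : ℝ) : EReal)) \ D) ∩ latt).Nonempty :=
      ⟨y + k, ⟨mem_ext (y + k) _ sideOK le_rfl, hnotDyk⟩, latt_add hylatt hknlatt⟩
    have hle := hmin _ hm1 hm2
    rw [hlR] at hle
    have hle2 := EReal.coe_le_coe_iff.1 hle
    have hik : (inner ℝ (y + k) v : ℝ) = (inner ℝ y v : ℝ) + (inner ℝ k v : ℝ) := inner_add_left y k v
    linarith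

end Droplet

section Claims

lemma ehs_convex (u : E) (l : EReal) : Convex ℝ (ehs u l) := by
  rcases eq_or_ne l ⊤ with rfl | htop
  · intro x _ y _ a b _ _ _
    show ((inner ℝ (a • x + b • y) u : ℝ) : EReal) ≤ (⊤ : EReal)
    exact le_top
  rcases eq_or_ne l ⊥ with rfl | hbot
  · intro x hx
    exact (EReal.coe_ne_bot _ (le_bot_iff.1 hx)).elim
  obtain ⟨c, rfl⟩ : ∃ c : ℝ, l = (c : EReal) := ⟨l.toReal, (EReal.coe_toReal htop hbot).symm⟩
  intro x hx y hy a b ha hb hab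
  have h1 : (inner ℝ x u : ℝ) ≤ c := EReal.coe_le_coe_iff.1 hx
  have h2 : (inner ℝ y u : ℝ) ≤ c := EReal.coe_le_coe_iff.1 hy
  show ((inner ℝ (a • x + b • y) u : ℝ) : EReal) ≤ (c : EReal)
  refine EReal.coe_le_coe_iff.2 ?_
  rw [inner_add_left, real_inner_smul_left, real_inner_smul_left]
  have e1 : a * (inner ℝ x u : ℝ) ≤ a * c := mul_le_mul_of_nonneg_left h1 ha
  have e2 : b * (inner ℝ y u : ℝ) ≤ b * c := mul_le_mul_of_nonneg_left h2 hb
  have e3 : a * c + b * c = c := by rw [← add_mul, hab, one_mul]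
  linarith

lemma extDroplet_convex (s : ℝ) (v : E) (D : Set E) (m : EReal) :
    Convex ℝ (extDroplet s v D m) := by
  apply Convex.inter
  · exact convex_iInter₂ (fun u _ => ehs_convex u (tight D u))
  · exact ehs_convex v m

lemma ext_pack {K : Set E} {s : ℝ} {C : ℝ} (hC1 : 1 ≤ C)
    {v : E} (hv : v ∈ quasiStable s) {D D' : Set E}
    (hND : IsNondeg s C (Ks K s) (rKs K s) D) (hExt : IsExtension s v D D') :
    ∃ lR Tv : ℝ, Tv < lR ∧
      (∀ y ∈ D, (inner ℝ y v : ℝ) ≤ Tv) ∧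
      D ⊆ D' ∧
      Convex ℝ D' ∧
      (∀ z, z ∈ (D' \ D) ∩ latt → (inner ℝ z v : ℝ) = lR) ∧
      (∀ x, x ∈ D' → x ∈ latt → Tv < (inner ℝ x v : ℝ) → x ∈ (D' \ D) ∩ latt) := by
  obtain ⟨Tv, hTvub, hTveq, -⟩ := nondeg_tight hC1 hND hv
  obtain ⟨l', hl'gt, hD'eq, hNE, hmin⟩ := hExt
  have hmemD' : ∀ x ∈ D', ∀ u ∈ quasiStable s, u ≠ v →
      ((inner ℝ x u : ℝ) : EReal) ≤ tight D u := by
    intro x hx u hu hne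
    rw [hD'eq] at hx
    exact Set.mem_iInter₂.1 hx.1 u ⟨hu, hne⟩
  have hmemD'v : ∀ x ∈ D', ((inner ℝ x v : ℝ) : EReal) ≤ l' := by
    intro x hx; rw [hD'eq] at hx; exact hx.2
  have mem_ext : ∀ (x : E) (m : EReal),
      (∀ u ∈ quasiStable s, u ≠ v → ((inner ℝ x u : ℝ) : EReal) ≤ tight D u) →
      ((inner ℝ x v : ℝ) : EReal) ≤ m → x ∈ extDroplet s v D m :=
    fun x m h1 h2 => ⟨Set.mem_iInter₂.2 fun u hu => h1 u hu.1 hu.2, h2⟩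
  have hgt : ∀ x ∈ D', x ∉ D → Tv < (inner ℝ x v : ℝ) := by
    intro x hx hxD
    by_contra hcon
    push_neg at hcon
    apply hxD
    rw [droplet_eq_tight hND.1]
    apply Set.mem_iInter₂.2
    intro u hu
    by_cases hne : u = v
    · subst hne
      show ((inner ℝ x u : ℝ) : EReal) ≤ tight D u
      rw [hTveq]; exact_mod_cast hcon
    · exact hmemD' x hx u hu hne
  obtain ⟨z₀, hz₀⟩ := hNE
  have hl'le : l' ≤ ((inner ℝ z₀ v : ℝ) : EReal) := by
    apply hmin
    · rw [hTveq]; exact_mod_cast hgt z₀ hz₀.1.1 hz₀.1.2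
    · exact ⟨z₀, ⟨mem_ext z₀ _ (fun u hu hne => hmemD' z₀ hz₀.1.1 u hu hne) le_rfl,
        hz₀.1.2⟩, hz₀.2⟩
  obtain ⟨lR, hlR⟩ : ∃ lR : ℝ, l' = (lR : EReal) := by
    have hbot : l' ≠ ⊥ := fun h => not_lt_bot (h ▸ hl'gt)
    have htop : l' ≠ ⊤ := fun h => EReal.coe_ne_top _ (top_le_iff.1 (h ▸ hl'le))
    exact ⟨l'.toReal, (EReal.coe_toReal htop hbot).symm⟩
  have hTvlR : Tv < lR := by
    have h := hl'gt; rw [hTveq, hlR] at h; exact_mod_cast h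
  refine ⟨lR, Tv, hTvlR, hTvub, ?_, ?_, ?_, ?_⟩
  · intro x hx
    rw [hD'eq]
    exact ⟨Set.mem_iInter₂.2 fun u _ => D_subset_ehs_tight D u hx,
      le_trans (D_subset_ehs_tight D v hx) (le_of_lt hl'gt)⟩
  · rw [hD'eq]; exact extDroplet_convex s v D l'
  · intro z hz
    have hle : (inner ℝ z v : ℝ) ≤ lR := by
      have h := hmemD'v z hz.1.1; rw [hlR] at h; exact_mod_cast h
    rcases eq_or_lt_of_le hle with h | h
    · exact h
    exfalso
    have hTvz : Tv < (inner ℝ z v : ℝ) := hgt z hz.1.1 hz.1.2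
    have hm := hmin ((inner ℝ z v : ℝ) : EReal) (by rw [hTveq]; exact_mod_cast hTvz)
      ⟨z, ⟨mem_ext z _ (fun u hu hne => hmemD' z hz.1.1 u hu hne) le_rfl, hz.1.2⟩, hz.2⟩
    rw [hlR] at hm
    exact absurd (EReal.coe_le_coe_iff.1 hm) (not_le.2 h)
  · intro x hxD' hxlatt hxv
    refine ⟨⟨hxD', ?_⟩, hxlatt⟩
    intro hxD
    have h := hTvub x hxD
    linarith

lemma rKs_le_cnt_succ {K : Set E} {s : ℝ} {v : E} (hv0 : v ≠ 0) :
    rKs K s ≤ {x : E | x ∈ Ks K s ∧ (inner ℝ x v : ℝ) < 0}.ncard + 1 := by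
  have hmem : {x : E | x ∈ Ks K s ∧ (inner ℝ x v : ℝ) < 0}.ncard ∈
      (fun u : E => {x : E | x ∈ Ks K s ∧ (inner ℝ x u : ℝ) < 0}.ncard) '' {u : E | u ≠ 0} :=
    ⟨v, hv0, rfl⟩
  have h := Nat.sInf_le hmem
  have hr : rKs K s = 1 + sInf ((fun u : E =>
    {x : E | x ∈ Ks K s ∧ (inner ℝ x u : ℝ) < 0}.ncard) '' {u : E | u ≠ 0}) := rfl
  omega

lemma cnt_ge_unstable {K : Set E} {s : ℝ} {v : E} (hv : v ∈ quasiStable s)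
    (hvu : v ∉ stableDirs (Ks K s) (rKs K s)) :
    rKs K s ≤ {x : E | x ∈ Ks K s ∧ (inner ℝ x v : ℝ) < 0}.ncard := by
  by_contra h
  exact hvu ⟨qs_unit hv, not_le.1 h⟩

lemma subset_iterate (𝒦 : Set E) (r : ℕ) (B A : Set E) (n : ℕ) :
    A ⊆ (stepIn 𝒦 r B)^[n] A := by
  induction n with
  | zero => simp
  | succ n ih =>
    rw [Function.iterate_succ_apply']
    exact ih.trans Set.subset_union_left

lemma infect_mem {K : Set E} (hK : NiceK K) {s : ℝ} (hs : 2 ≤ s) {B A : Set E} {y : E}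
    (hyB : y ∈ B) (hylatt : y ∈ latt) {S : Set E}
    (hS : S ⊆ ((fun k => y + k) '' (Ks K s)) ∩ A) (hcard : rKs K s ≤ S.ncard) :
    y ∈ stepIn (Ks K s) (rKs K s) B A := by
  refine Or.inr ⟨⟨hyB, hylatt⟩, ?_⟩
  refine le_trans hcard (Set.ncard_le_ncard hS ?_)
  exact Set.Finite.inter_of_left (Set.Finite.image _ (Ks_finite hK hs)) _

lemma cnt_image (y : E) (S : Set E) :
    ((fun k => y + k) '' S).ncard = S.ncard :=
  Set.ncard_image_of_injective S (fun a b h => by simpa using h)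

lemma claim1 {K : Set E} (hK : NiceK K) {s : ℝ} (hs : 2 ≤ s) {C : ℝ} (hC1 : 1 ≤ C)
    (hC : 15 * (s+1)^5 ≤ C ^ ((1:ℝ)/3)) {v : E}
    (hv : v ∈ quasiStable s \ stableDirs (Ks K s) (rKs K s)) {D D' : Set E}
    (hND : IsNondeg s C (Ks K s) (rKs K s) D) (hExt : IsExtension s v D D') :
    D' ∩ latt ⊆ bpClIn (Ks K s) (rKs K s) (D' \ D) D := by
  intro x hx
  by_cases hxD : x ∈ D
  · refine Set.mem_iUnion.2 ⟨0, ?_⟩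
    simpa using (⟨hxD, hx.2⟩ : x ∈ D ∩ latt)
  · have hxR : x ∈ (D' \ D) ∩ latt := ⟨⟨hx.1, hxD⟩, hx.2⟩
    refine Set.mem_iUnion.2 ⟨1, ?_⟩
    rw [Function.iterate_one]
    refine infect_mem hK hs hxR.1 hxR.2
      (S := (fun k => x + k) '' {k : E | k ∈ Ks K s ∧ (inner ℝ k v : ℝ) < 0}) ?_ ?_
    · rintro _ ⟨k, ⟨hkK, hkv⟩, rfl⟩
      exact ⟨⟨k, hkK, rfl⟩, claimA hK hs hC1 hC hv.1 hND hExt x hxR k hkK hkv,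
        latt_add hxR.2 hkK.2⟩
    · rw [cnt_image]
      exact cnt_ge_unstable hv.1 hv.2

end Claims

section Claim2

lemma cnt_split {K : Set E} (hK : NiceK K) {s : ℝ} (hs : 2 ≤ s) (u : E) :
    (Ks K s).ncard = 2 * {x : E | x ∈ Ks K s ∧ (inner ℝ x u : ℝ) < 0}.ncard
      + {x : E | x ∈ Ks K s ∧ (inner ℝ x u : ℝ) = 0}.ncard := by
  classical
  have hfin := Ks_finite hK hs
  have hNfin : {x : E | x ∈ Ks K s ∧ (inner ℝ x u : ℝ) < 0}.Finite :=
    hfin.subset (fun x hx => hx.1)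
  have hPfin : {x : E | x ∈ Ks K s ∧ 0 < (inner ℝ x u : ℝ)}.Finite :=
    hfin.subset (fun x hx => hx.1)
  have hZfin : {x : E | x ∈ Ks K s ∧ (inner ℝ x u : ℝ) = 0}.Finite :=
    hfin.subset (fun x hx => hx.1)
  have hPN : {x : E | x ∈ Ks K s ∧ 0 < (inner ℝ x u : ℝ)}
      = (fun x : E => -x) '' {x : E | x ∈ Ks K s ∧ (inner ℝ x u : ℝ) < 0} := by
    ext x
    constructor
    · rintro ⟨hxK, hx⟩
      refine ⟨-x, ⟨Ks_neg_mem hK hxK, ?_⟩, neg_neg x⟩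
      rw [inner_neg_left]; linarith
    · rintro ⟨w, ⟨hwK, hw⟩, rfl⟩
      refine ⟨Ks_neg_mem hK hwK, ?_⟩
      rw [inner_neg_left]; linarith
  have hcard : {x : E | x ∈ Ks K s ∧ 0 < (inner ℝ x u : ℝ)}.ncard
      = {x : E | x ∈ Ks K s ∧ (inner ℝ x u : ℝ) < 0}.ncard := by
    rw [hPN]; exact Set.ncard_image_of_injective _ neg_injective
  have hsplit : Ks K s = {x : E | x ∈ Ks K s ∧ (inner ℝ x u : ℝ) < 0}
      ∪ {x : E | x ∈ Ks K s ∧ 0 < (inner ℝ x u : ℝ)}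
      ∪ {x : E | x ∈ Ks K s ∧ (inner ℝ x u : ℝ) = 0} := by
    ext x
    constructor
    · intro hx
      rcases lt_trichotomy ((inner ℝ x u : ℝ)) 0 with h | h | h
      · exact Or.inl (Or.inl ⟨hx, h⟩)
      · exact Or.inr ⟨hx, h⟩
      · exact Or.inl (Or.inr ⟨hx, h⟩)
    · rintro ((⟨h, -⟩ | ⟨h, -⟩) | ⟨h, -⟩) <;> exact h
  have hd1 : Disjoint {x : E | x ∈ Ks K s ∧ (inner ℝ x u : ℝ) < 0}
      {x : E | x ∈ Ks K s ∧ 0 < (inner ℝ x u : ℝ)} := by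
    rw [Set.disjoint_left]; rintro x ⟨-, h1⟩ ⟨-, h2⟩; linarith
  have hd2 : Disjoint ({x : E | x ∈ Ks K s ∧ (inner ℝ x u : ℝ) < 0}
      ∪ {x : E | x ∈ Ks K s ∧ 0 < (inner ℝ x u : ℝ)})
      {x : E | x ∈ Ks K s ∧ (inner ℝ x u : ℝ) = 0} := by
    rw [Set.disjoint_left]; rintro x (⟨-, h1⟩ | ⟨-, h1⟩) ⟨-, h2⟩ <;> linarith
  conv_lhs => rw [hsplit]
  rw [Set.ncard_union_eq hd2 (hNfin.union hPfin) hZfin,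
    Set.ncard_union_eq hd1 hNfin hPfin, hcard]
  ring

lemma stable_perp {K : Set E} (hK : NiceK K) {s : ℝ} (hs : 2 ≤ s) {v : E}
    (hv : v ∈ quasiStable s) (hstab : v ∈ stableDirs (Ks K s) (rKs K s)) :
    ∃ q ∈ Ks K s, q ≠ 0 ∧ (inner ℝ q v : ℝ) = 0 := by
  by_contra hcon
  push_neg at hcon
  have hZv : {x : E | x ∈ Ks K s ∧ (inner ℝ x v : ℝ) = 0} = {0} := by
    ext x
    constructor
    · rintro ⟨hxK, hx⟩
      by_contra hx0
      exact (hcon x hxK (by simpa using hx0)) hx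
    · intro hx
      have hx' : x = 0 := hx
      subst hx'
      exact ⟨Ks_zero_mem hK, inner_zero_left _⟩
  have he₁ : (pt 1 0 : E) ≠ 0 := by
    intro h
    have := congrArg (fun w : E => w 0) h
    simp only [pt0, zero_c] at this
    exact one_ne_zero this
  have hY := Ks_unitY hK hs
  have hZe : ({(0:E), pt 0 1, pt 0 (-1)} : Set E)
      ⊆ {x : E | x ∈ Ks K s ∧ (inner ℝ x (pt 1 0) : ℝ) = 0} := by
    rintro x (rfl | rfl | rfl)
    · exact ⟨Ks_zero_mem hK, inner_zero_left _⟩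
    · exact ⟨hY.1, by rw [inner2, pt0, pt0, pt1, pt1]; ring⟩
    · exact ⟨hY.2, by rw [inner2, pt0, pt0, pt1, pt1]; ring⟩
  have hne1 : (0:E) ≠ pt 0 1 := by
    intro h
    have := congrArg (fun w : E => w 1) h
    simp only [pt1, zero_c] at this
    exact one_ne_zero this.symm
  have hne2 : (0:E) ≠ pt 0 (-1) := by
    intro h
    have := congrArg (fun w : E => w 1) h
    simp only [pt1, zero_c] at this
    norm_num at this
  have hne3 : (pt 0 1 : E) ≠ pt 0 (-1) := by
    intro h
    have := congrArg (fun w : E => w 1) h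
    simp only [pt1] at this
    norm_num at this
  have h3 : ({(0:E), pt 0 1, pt 0 (-1)} : Set E).ncard = 3 :=
    Set.ncard_eq_three.2 ⟨0, pt 0 1, pt 0 (-1), hne1, hne2, hne3, rfl⟩
  have hfin := Ks_finite hK hs
  have hZe_card : 3 ≤ {x : E | x ∈ Ks K s ∧ (inner ℝ x (pt 1 0) : ℝ) = 0}.ncard := by
    rw [← h3]
    exact Set.ncard_le_ncard hZe (hfin.subset (fun x hx => hx.1))
  have hsplit_v := cnt_split hK hs v
  have hsplit_e := cnt_split hK hs (pt 1 0)
  have hZv_card : {x : E | x ∈ Ks K s ∧ (inner ℝ x v : ℝ) = 0}.ncard = 1 := by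
    rw [hZv]; exact Set.ncard_singleton 0
  have hstab2 : {x : E | x ∈ Ks K s ∧ (inner ℝ x v : ℝ) < 0}.ncard < rKs K s := hstab.2
  have hmem : {x : E | x ∈ Ks K s ∧ (inner ℝ x (pt 1 0) : ℝ) < 0}.ncard ∈
      (fun u : E => {x : E | x ∈ Ks K s ∧ (inner ℝ x u : ℝ) < 0}.ncard) '' {u : E | u ≠ 0} :=
    ⟨pt 1 0, he₁, rfl⟩
  have hinf_le := Nat.sInf_le hmem
  have hr : rKs K s = 1 + sInf ((fun u : E =>
    {x : E | x ∈ Ks K s ∧ (inner ℝ x u : ℝ) < 0}.ncard) '' {u : E | u ≠ 0}) := rfl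
  omega

lemma bezout_perp (a b : ℤ) (hab : ¬(a = 0 ∧ b = 0)) :
    ∃ pa pb : ℤ, ¬(pa = 0 ∧ pb = 0) ∧ a * pa + b * pb = 0 ∧
      ∀ x y : ℤ, a * x + b * y = 0 → ∃ m : ℤ, x = m * pa ∧ y = m * pb := by
  have hg : Int.gcd a b ≠ 0 := fun h => hab (Int.gcd_eq_zero_iff.1 h)
  have hg0' : ((Int.gcd a b : ℤ)) ≠ 0 := by exact_mod_cast hg
  obtain ⟨A, hA⟩ : ∃ A : ℤ, A = a / ((Int.gcd a b : ℤ)) := ⟨_, rfl⟩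
  obtain ⟨B, hB⟩ : ∃ B : ℤ, B = b / ((Int.gcd a b : ℤ)) := ⟨_, rfl⟩
  have ha' : a = ((Int.gcd a b : ℤ)) * A := by
    rw [hA]; exact (Int.mul_ediv_cancel' (Int.gcd_dvd_left a b)).symm
  have hb' : b = ((Int.gcd a b : ℤ)) * B := by
    rw [hB]; exact (Int.mul_ediv_cancel' (Int.gcd_dvd_right a b)).symm
  have hgcd1 : Int.gcd A B = 1 := by
    rw [hA, hB]; exact Int.gcd_div_gcd_div_gcd (Nat.pos_of_ne_zero hg)
  refine ⟨B, -A, ?_, by linear_combination B * ha' - A * hb', ?_⟩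
  · rintro ⟨h1, h2⟩
    apply hab
    have hA0 : A = 0 := by omega
    constructor
    · rw [ha', hA0, mul_zero]
    · rw [hb', h1, mul_zero]
  · intro x y hxy
    have h2' : ((Int.gcd a b : ℤ)) * (A * x + B * y) = 0 := by
      linear_combination hxy - x * ha' - y * hb'
    have h2 : A * x + B * y = 0 := by
      rcases mul_eq_zero.1 h2' with h | h
      · exact absurd h hg0'
      · exact h
    by_cases hb0 : B = 0
    · have hgB : Int.gcd A B = A.natAbs := by rw [hb0, Int.gcd_zero_right]
      have ha1 : A = 1 ∨ A = -1 := by rw [hgB] at hgcd1; omega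
      rcases ha1 with h' | h'
      · subst h'
        subst hb0
        exact ⟨-y, by omega, by omega⟩
      · subst h'
        subst hb0
        exact ⟨y, by omega, by omega⟩
    · have hco : IsCoprime B A := by
        rw [Int.isCoprime_iff_gcd_eq_one, Int.gcd_comm]
        exact hgcd1
      have h3 : B ∣ A * x := ⟨-y, by linear_combination h2⟩
      obtain ⟨m, hm⟩ := hco.dvd_of_dvd_mul_left h3
      refine ⟨m, by rw [hm]; ring, ?_⟩
      have h4 : B * (A * m + y) = 0 := by linear_combination h2 - A * hm
      rcases mul_eq_zero.1 h4 with h | h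
      · exact absurd h hb0
      · linear_combination h

end Claim2

section Final

set_option maxHeartbeats 2000000 in
lemma claim2 {K : Set E} (hK : NiceK K) {s : ℝ} (hs : 2 ≤ s) {C : ℝ} (hC1 : 1 ≤ C)
    (hC : 15 * (s+1)^5 ≤ C ^ ((1:ℝ)/3)) {v : E}
    (hv : v ∈ quasiStable s) (hstab : v ∈ stableDirs (Ks K s) (rKs K s)) {D D' : Set E}
    (hND : IsNondeg s C (Ks K s) (rKs K s) D) (hExt : IsExtension s v D D')
    {x : E} (hx : x ∈ ((((D' \ D) ∩ latt) + Ks K s) \ D)) :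
    D' ∩ latt ⊆ bpClIn (Ks K s) (rKs K s) (D' \ D) ({x} ∪ D) := by
  obtain ⟨lR, Tv, hTvlR, hTvub, hDD', hconv, hrow, hcrit⟩ := ext_pack hC1 hv hND hExt
  obtain ⟨z₀, hz₀R, k₀, hk₀K, hzk₀⟩ := Set.mem_add.1 hx.1
  have hxlatt : x ∈ latt := by rw [← hzk₀]; exact latt_add hz₀R.2 hk₀K.2
  have hxD : x ∉ D := hx.2
  obtain ⟨q, hqK, hq0, hqv⟩ := stable_perp hK hs hv hstab
  obtain ⟨va, vb, c, hc0, hc2s, -, -, hvz⟩ := qs_witness hv hs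
  have hvab : ¬(va = 0 ∧ vb = 0) := by
    rintro ⟨rfl, rfl⟩
    have h00 : pt ((0:ℤ):ℝ) ((0:ℤ):ℝ) = (0:E) := by push_cast; exact zero_eq_pt.symm
    rw [h00] at hvz
    have h1 := congrArg norm hvz
    rw [norm_zero, norm_smul, Real.norm_eq_abs, qs_unit hv, mul_one] at h1
    have h2 := abs_eq_zero.1 h1.symm
    linarith
  obtain ⟨pa, pb, hpab, hperp, huniq⟩ := bezout_perp va vb hvab
  have hpv : (inner ℝ (pt (pa:ℝ) (pb:ℝ)) v : ℝ) = 0 := by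
    have h2 : ((pa * va + pb * vb : ℤ) : ℝ) = 0 := by
      have h4 : pa * va + pb * vb = (0:ℤ) := by linear_combination hperp
      exact_mod_cast congrArg (fun n : ℤ => (n:ℝ)) h4
    have h1 : (inner ℝ (pt (pa:ℝ) (pb:ℝ)) (pt (va:ℝ) (vb:ℝ)) : ℝ) = 0 := by
      rw [inner2, pt0, pt1, pt0, pt1]
      push_cast at h2 ⊢
      linarith
    rw [hvz, real_inner_smul_right] at h1
    exact (mul_eq_zero.1 h1).resolve_left (ne_of_gt hc0)
  have hp0 : pt (pa:ℝ) (pb:ℝ) ≠ 0 := by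
    intro h
    apply hpab
    constructor
    · have h5 := congrArg (fun w : E => w 0) h
      simp only [pt0, zero_c] at h5
      exact_mod_cast h5
    · have h5 := congrArg (fun w : E => w 1) h
      simp only [pt1, zero_c] at h5
      exact_mod_cast h5
  obtain ⟨qa, qb, hqab⟩ := id hqK.2
  have hqperp : va * qa + vb * qb = 0 := by
    have h1 : (inner ℝ q (pt (va:ℝ) (vb:ℝ)) : ℝ) = 0 := by
      rw [hvz, real_inner_smul_right, hqv, mul_zero]
    rw [hqab, inner2, pt0, pt1, pt0, pt1] at h1
    have h3 : ((va * qa + vb * qb : ℤ) : ℝ) = 0 := by push_cast; linear_combination h1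
    exact_mod_cast h3
  obtain ⟨m₀, hm₀a, hm₀b⟩ := huniq qa qb hqperp
  have hm₀0 : m₀ ≠ 0 := by
    rintro rfl
    apply hq0
    rw [hqab]
    have hqa : qa = 0 := by omega
    have hqb : qb = 0 := by omega
    rw [hqa, hqb]
    push_cast
    exact zero_eq_pt.symm
  have hqp : q = (m₀ : ℝ) • pt (pa:ℝ) (pb:ℝ) := by
    rw [hqab]
    apply ext2
    · simp only [smul_c, pt0]
      exact_mod_cast congrArg (fun n : ℤ => (n:ℝ)) hm₀a
    · simp only [smul_c, pt1]
      exact_mod_cast congrArg (fun n : ℤ => (n:ℝ)) hm₀b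
  have hscale : ∀ (ww : E), ww ∈ s • K → ∀ m : ℝ, 1 ≤ m → m⁻¹ • ww ∈ s • K := by
    intro ww hww m hm
    have hm0 : (0:ℝ) < m := by linarith
    have h1 : (0:ℝ) ≤ m⁻¹ := by positivity
    have h2 : (0:ℝ) ≤ 1 - m⁻¹ := by
      rw [sub_nonneg]; exact (inv_le_one₀ hm0).2 hm
    have h3 : m⁻¹ + (1 - m⁻¹) = 1 := by ring
    have h := (hK.convex.smul s) hww ((Ks_zero_mem hK).1) h1 h2 h3
    rwa [smul_zero, add_zero] at h
  have hmr : ∀ m : ℝ, 1 ≤ m → ∀ ww : E, ww ∈ s • K → ww = m • pt (pa:ℝ) (pb:ℝ) →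
      pt (pa:ℝ) (pb:ℝ) ∈ s • K := by
    intro m hm ww hww hwp
    have h2 := hscale ww hww m hm
    rwa [hwp, inv_smul_smul₀ (ne_of_gt (by linarith : (0:ℝ) < m))] at h2
  have hpsK : pt (pa:ℝ) (pb:ℝ) ∈ s • K := by
    rcases lt_or_gt_of_ne hm₀0 with hm | hm
    · refine hmr (-(m₀:ℝ)) ?_ (-q) (Ks_neg_mem hK hqK).1 ?_
      · have h6 : (m₀:ℝ) ≤ -1 := by exact_mod_cast (by omega : m₀ ≤ (-1:ℤ))
        linarith
      · rw [hqp]; exact (neg_smul _ _).symm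
    · refine hmr ((m₀:ℝ)) ?_ q hqK.1 hqp
      exact_mod_cast (by omega : (1:ℤ) ≤ m₀)
  have hpKs : pt (pa:ℝ) (pb:ℝ) ∈ Ks K s := ⟨hpsK, pt_mem_latt pa pb⟩
  have hpnegKs : -(pt (pa:ℝ) (pb:ℝ)) ∈ Ks K s := Ks_neg_mem hK hpKs
  have hclass : ∀ z ∈ (D' \ D) ∩ latt, ∃ m : ℤ, z - z₀ = (m:ℝ) • pt (pa:ℝ) (pb:ℝ) := by
    intro z hz
    obtain ⟨za, zb, hzab⟩ := latt_sub hz.2 hz₀R.2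
    have hperp2 : va * za + vb * zb = 0 := by
      have h1 : (inner ℝ (z - z₀) v : ℝ) = 0 := by
        rw [inner_sub_left, hrow z hz, hrow z₀ hz₀R, sub_self]
      have h2 : (inner ℝ (z - z₀) (pt (va:ℝ) (vb:ℝ)) : ℝ) = 0 := by
        rw [hvz, real_inner_smul_right, h1, mul_zero]
      rw [hzab, inner2, pt0, pt1, pt0, pt1] at h2
      have h3 : ((va * za + vb * zb : ℤ) : ℝ) = 0 := by push_cast; linear_combination h2
      exact_mod_cast h3
    obtain ⟨m, hma, hmb⟩ := huniq za zb hperp2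
    refine ⟨m, ?_⟩
    rw [hzab]
    apply ext2
    · simp only [smul_c, pt0]
      exact_mod_cast congrArg (fun n : ℤ => (n:ℝ)) hma
    · simp only [smul_c, pt1]
      exact_mod_cast congrArg (fun n : ℤ => (n:ℝ)) hmb
  have hv0 : v ≠ 0 := by
    intro h
    have h7 := qs_unit hv
    rw [h, norm_zero] at h7
    exact zero_ne_one h7
  have hcntlow : rKs K s ≤ {k : E | k ∈ Ks K s ∧ (inner ℝ k v : ℝ) < 0}.ncard + 1 :=
    rKs_le_cnt_succ hv0
  have hfinK := Ks_finite hK hs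
  have hstep : ∀ (A : Set E) (zz : E), zz ∈ (D' \ D) ∩ latt → ∀ xx, xx ∈ A → xx ∉ D →
      xx ∈ (fun k => zz + k) '' Ks K s → (D ∩ latt) ⊆ A →
      zz ∈ stepIn (Ks K s) (rKs K s) (D' \ D) A := by
    intro A zz hzz xx hxxA hxxD hxximg hDA
    refine infect_mem hK hs hzz.1 hzz.2
      (S := ((fun k => zz + k) '' {k : E | k ∈ Ks K s ∧ (inner ℝ k v : ℝ) < 0}) ∪ {xx}) ?_ ?_
    · rintro w (⟨k, ⟨hkK, hkv⟩, rfl⟩ | hw)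
      · have hmem := claimA hK hs hC1 hC hv hND hExt zz hzz k hkK hkv
        exact ⟨⟨k, hkK, rfl⟩, hDA ⟨hmem, latt_add hzz.2 hkK.2⟩⟩
      · have hw' : w = xx := hw
        subst hw'
        exact ⟨hxximg, hxxA⟩
    · have hdisj : Disjoint ((fun k => zz + k) ''
          {k : E | k ∈ Ks K s ∧ (inner ℝ k v : ℝ) < 0}) {xx} := by
        rw [Set.disjoint_singleton_right]
        rintro ⟨k, ⟨hkK, hkv⟩, he⟩
        exact hxxD (he ▸ claimA hK hs hC1 hC hv hND hExt zz hzz k hkK hkv)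
      rw [Set.ncard_union_eq hdisj ((hfinK.subset (fun k hk => hk.1)).image _)
        (Set.finite_singleton _), cnt_image, Set.ncard_singleton]
      exact hcntlow
  have hximg : x ∈ (fun k => z₀ + k) '' Ks K s := ⟨k₀, hk₀K, hzk₀⟩
  have hDA₀ : D ∩ latt ⊆ ({x} ∪ D) ∩ latt := fun w hw => ⟨Or.inr hw.1, hw.2⟩
  have hxA₀ : x ∈ ({x} ∪ D) ∩ latt := ⟨Or.inl rfl, hxlatt⟩
  have hmono := subset_iterate (Ks K s) (rKs K s) (D' \ D) (({x} ∪ D) ∩ latt)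
  have hrowstep : ∀ (j : ℕ) (z : E), z ∈ (D' \ D) ∩ latt →
      (z - z₀ = ((j:ℝ)) • pt (pa:ℝ) (pb:ℝ) ∨ z₀ - z = ((j:ℝ)) • pt (pa:ℝ) (pb:ℝ)) →
      z ∈ (stepIn (Ks K s) (rKs K s) (D' \ D))^[j+1] (({x} ∪ D) ∩ latt) := by
    intro j
    induction j with
    | zero =>
      intro z hz hcase
      have hzz₀ : z = z₀ := by
        rcases hcase with h | h
        · have h2 : z - z₀ = 0 := by rw [h]; simp
          exact sub_eq_zero.1 h2
        · have h2 : z₀ - z = 0 := by rw [h]; simp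
          exact (sub_eq_zero.1 h2).symm
      subst hzz₀
      rw [zero_add, Function.iterate_one]
      exact hstep _ z hz x hxA₀ hxD hximg hDA₀
    | succ j ih =>
      intro z hz hcase
      rcases hcase with h | h
      · have hzeq : z = z₀ + ((j:ℝ)+1) • pt (pa:ℝ) (pb:ℝ) := by
          have h2 : z - z₀ = ((j:ℝ)+1) • pt (pa:ℝ) (pb:ℝ) := by
            push_cast at h; exact h
          rw [← h2]; abel
        obtain ⟨z', hz'def⟩ : ∃ z', z' = z₀ + (j:ℝ) • pt (pa:ℝ) (pb:ℝ) := ⟨_, rfl⟩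
        have hz'sub : z' - z₀ = (j:ℝ) • pt (pa:ℝ) (pb:ℝ) := by rw [hz'def]; abel
        have hcoef : z' = ((1:ℝ) - (j:ℝ)/((j:ℝ)+1)) • z₀ + ((j:ℝ)/((j:ℝ)+1)) • z := by
          rw [hz'def, hzeq]
          match_scalars <;> field_simp <;> try ring
        have ha : (0:ℝ) ≤ 1 - (j:ℝ)/((j:ℝ)+1) := by
          rw [sub_nonneg, div_le_one (by positivity)]
          linarith
        have hb : (0:ℝ) ≤ (j:ℝ)/((j:ℝ)+1) := by positivity
        have hz'D' : z' ∈ D' := by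
          rw [hcoef]
          exact hconv hz₀R.1.1 hz.1.1 ha hb (by ring)
        have hz'latt : z' ∈ latt := by
          rw [hz'def]
          have hcast : ((j:ℤ):ℝ) = (j:ℝ) := by push_cast; ring
          exact latt_add hz₀R.2 (by rw [← hcast]; exact latt_zsmul (j:ℤ) (pt_mem_latt pa pb))
        have hz'v : (inner ℝ z' v : ℝ) = lR := by
          rw [hz'def, inner_add_left, real_inner_smul_left, hpv, mul_zero, add_zero]
          exact hrow z₀ hz₀R
        have hz'R : z' ∈ (D' \ D) ∩ latt := hcrit z' hz'D' hz'latt (by rw [hz'v]; exact hTvlR)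
        have hz'it := ih z' hz'R (Or.inl hz'sub)
        rw [Function.iterate_succ_apply']
        refine hstep _ z hz z' hz'it hz'R.1.2 ?_ ?_
        · refine ⟨-(pt (pa:ℝ) (pb:ℝ)), hpnegKs, ?_⟩
          rw [hz'def, hzeq]
          module
        · exact fun w hw => (hmono (j+1)) (hDA₀ hw)
      · have hzeq : z = z₀ - ((j:ℝ)+1) • pt (pa:ℝ) (pb:ℝ) := by
          have h2 : z₀ - z = ((j:ℝ)+1) • pt (pa:ℝ) (pb:ℝ) := by
            push_cast at h; exact h
          rw [← h2]; abel
        obtain ⟨z', hz'def⟩ : ∃ z', z' = z₀ - (j:ℝ) • pt (pa:ℝ) (pb:ℝ) := ⟨_, rfl⟩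
        have hz'sub : z₀ - z' = (j:ℝ) • pt (pa:ℝ) (pb:ℝ) := by rw [hz'def]; abel
        have hcoef : z' = ((1:ℝ) - (j:ℝ)/((j:ℝ)+1)) • z₀ + ((j:ℝ)/((j:ℝ)+1)) • z := by
          rw [hz'def, hzeq]
          match_scalars <;> field_simp <;> try ring
        have ha : (0:ℝ) ≤ 1 - (j:ℝ)/((j:ℝ)+1) := by
          rw [sub_nonneg, div_le_one (by positivity)]
          linarith
        have hb : (0:ℝ) ≤ (j:ℝ)/((j:ℝ)+1) := by positivity
        have hz'D' : z' ∈ D' := by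
          rw [hcoef]
          exact hconv hz₀R.1.1 hz.1.1 ha hb (by ring)
        have hz'latt : z' ∈ latt := by
          rw [hz'def, sub_eq_add_neg, ← neg_smul]
          have hcast : -(j:ℝ) = ((-(j:ℤ) : ℤ):ℝ) := by push_cast; ring
          rw [hcast]
          exact latt_add hz₀R.2 (latt_zsmul _ (pt_mem_latt pa pb))
        have hz'v : (inner ℝ z' v : ℝ) = lR := by
          rw [hz'def, inner_sub_left, real_inner_smul_left, hpv, mul_zero, sub_zero]
          exact hrow z₀ hz₀R
        have hz'R : z' ∈ (D' \ D) ∩ latt := hcrit z' hz'D' hz'latt (by rw [hz'v]; exact hTvlR)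
        have hz'it := ih z' hz'R (Or.inr hz'sub)
        rw [Function.iterate_succ_apply']
        refine hstep _ z hz z' hz'it hz'R.1.2 ?_ ?_
        · refine ⟨pt (pa:ℝ) (pb:ℝ), hpKs, ?_⟩
          rw [hz'def, hzeq]
          module
        · exact fun w hw => (hmono (j+1)) (hDA₀ hw)
  intro y hy
  by_cases hyD : y ∈ D
  · refine Set.mem_iUnion.2 ⟨0, ?_⟩
    simpa using (⟨Or.inr hyD, hy.2⟩ : y ∈ ({x} ∪ D) ∩ latt)
  · have hyR : y ∈ (D' \ D) ∩ latt := ⟨⟨hy.1, hyD⟩, hy.2⟩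
    obtain ⟨m, hm⟩ := hclass y hyR
    refine Set.mem_iUnion.2 ⟨m.natAbs + 1, ?_⟩
    refine hrowstep m.natAbs y hyR ?_
    rcases Int.natAbs_eq m with he | he
    · left
      have h3 : ((m : ℤ):ℝ) = ((m.natAbs : ℕ):ℝ) := by
        have h5 := congrArg (fun n : ℤ => (n:ℝ)) he
        simp only [Int.cast_natCast] at h5
        exact h5
      rw [hm, h3]
    · right
      have h3 : ((-m : ℤ):ℝ) = ((m.natAbs : ℕ):ℝ) := by
        have h4 : -m = ((m.natAbs : ℕ) : ℤ) := by omega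
        have h5 := congrArg (fun n : ℤ => (n:ℝ)) h4
        simp only [Int.cast_natCast] at h5
        exact h5
      have h2 : z₀ - y = ((-m : ℤ):ℝ) • pt (pa:ℝ) (pb:ℝ) := by
        rw [← neg_sub, hm]
        push_cast
        rw [neg_smul]
      rw [h2, h3]

end Final

set_option maxHeartbeats 1000000 in
theorem statement_13 (K : Set E) (hK : NiceK K) :
    ∃ s₀ : ℝ, ∀ s : ℝ, s₀ ≤ s → ∃ C₀ : ℝ, ∀ C : ℝ, C₀ ≤ C →
      (∀ v ∈ quasiStable s \ stableDirs (Ks K s) (rKs K s), ∀ D D' : Set E,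
        IsNondeg s C (Ks K s) (rKs K s) D → IsExtension s v D D' →
        D' ∩ latt ⊆ bpClIn (Ks K s) (rKs K s) (D' \ D) D) ∧
      (∀ v ∈ quasiStable s ∩ stableDirs (Ks K s) (rKs K s), ∀ D D' : Set E,
        IsNondeg s C (Ks K s) (rKs K s) D → IsExtension s v D D' →
        ∀ x ∈ ((((D' \ D) ∩ latt) + Ks K s) \ D),
          D' ∩ latt ⊆ bpClIn (Ks K s) (rKs K s) (D' \ D) ({x} ∪ D)) := by
  refine ⟨2, fun s hs => ⟨(15 * (s+1)^5)^(3:ℕ) + 1, fun C hC => ?_⟩⟩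
  have hM1 : (1:ℝ) ≤ 15*(s+1)^5 := by
    have h1 : (1:ℝ) ≤ (s+1)^5 := one_le_pow₀ (by linarith)
    linarith
  have hC1 : (1:ℝ) ≤ C := by
    have h2 : (1:ℝ) ≤ (15*(s+1)^5)^(3:ℕ) := one_le_pow₀ hM1
    linarith
  have hCc : 15*(s+1)^5 ≤ C ^ ((1:ℝ)/3) := by
    have h0 : (0:ℝ) ≤ 15*(s+1)^5 := by linarith
    have h1 : ((15*(s+1)^5)^(3:ℕ) : ℝ) ^ ((1:ℝ)/3) = 15*(s+1)^5 := by
      rw [← Real.rpow_natCast (15*(s+1)^5) 3, ← Real.rpow_mul h0]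
      norm_num
    have h2 : ((15*(s+1)^5)^(3:ℕ) : ℝ) ^ ((1:ℝ)/3) ≤ C ^ ((1:ℝ)/3) :=
      Real.rpow_le_rpow (by positivity) (by linarith) (by norm_num)
    rw [h1] at h2
    exact h2
  constructor
  · intro v hv D D' hND hExt
    exact claim1 hK hs hC1 hCc hv hND hExt
  · intro v hv D D' hND hExt x hx
    exact claim2 hK hs hC1 hCc hv.1 hv.2 hND hExt hx
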